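/- arXiv:2504.01720 — 8 statements merged into one kernel-verified Lean document; each statement's English description precedes it below -/
import Mathlib

section
/- For every IETWGFA M, there exists an even linear grammar G such that L(G) = L(M)_init-even. -/
namespace IETW

/-- An input-erasing two-way general finite automaton (IETWGFA). -/
structure GFA (T : Type) : Type 1 where
  Q : Type
  finQ : Finite Q
  start : Q
  accept : Set Q
  /-- Left rules: `(x, q, p)` represents `x q → p`. -/
  ruleL : Set (List T × Q × Q)
  /-- Right rules: `(q, x, p)` represents `q x → p`. -/
  ruleR : Set (Q × List T × Q)
  finL : ruleL.Finite
  finR : ruleR.Finite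

variable {T : Type}

/-- One move, labelled by its direction (`true` = left) and the number of erased symbols. -/
inductive GFA.Step (M : GFA T) :
    List T × M.Q × List T → Bool × ℕ → List T × M.Q × List T → Prop
  | left {u v x : List T} {q p : M.Q} (h : (x, q, p) ∈ M.ruleL) :
      GFA.Step M (u ++ x, q, v) (true, x.length) (u, p, v)
  | right {u v x : List T} {q p : M.Q} (h : (q, x, p) ∈ M.ruleR) :
      GFA.Step M (u, q, x ++ v) (false, x.length) (u, p, v)

/-- A computation along a list of move labels. -/
inductive GFA.Chain (M : GFA T) :
    List T × M.Q × List T → List (Bool × ℕ) → List T × M.Q × List T → Prop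
  | nil (c) : GFA.Chain M c [] c
  | cons {c c' c'' l ls} (h : GFA.Step M c l c') (h' : GFA.Chain M c' ls c'') :
      GFA.Chain M c (l :: ls) c''

/-- `L(M)`. -/
def GFA.lang (M : GFA T) : Set (List T) :=
  {w | ∃ x y ls f, w = x ++ y ∧ f ∈ M.accept ∧ M.Chain (x, M.start, y) ls ([], f, [])}

/-- The moves strictly alternate between left and right. -/
def Alternating (ls : List (Bool × ℕ)) : Prop :=
  ls.Chain' (fun a b => a.1 ≠ b.1)

/-- An even computation: alternating, of even length, and each odd-indexed move reads
the same number of symbols as the following move. -/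
def EvenTrace (ls : List (Bool × ℕ)) : Prop :=
  ls.length % 2 = 0 ∧ Alternating ls ∧
    ∀ i, 2 * i + 1 < ls.length →
      (ls.getD (2 * i) (true, 0)).2 = (ls.getD (2 * i + 1) (true, 0)).2

/-- An initialized even computation: one move followed by an even computation. -/
def InitEvenTrace (ls : List (Bool × ℕ)) : Prop :=
  ∃ l ls', ls = l :: ls' ∧ EvenTrace ls'

/-- `L(M)_alt`. -/
def GFA.langAlt (M : GFA T) : Set (List T) :=
  {w | ∃ x y ls f, w = x ++ y ∧ f ∈ M.accept ∧ Alternating ls ∧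
    M.Chain (x, M.start, y) ls ([], f, [])}

/-- `L(M)_even`. -/
def GFA.langEven (M : GFA T) : Set (List T) :=
  {w | ∃ x y ls f, w = x ++ y ∧ f ∈ M.accept ∧ EvenTrace ls ∧
    M.Chain (x, M.start, y) ls ([], f, [])}

/-- `L(M)_init-even`. -/
def GFA.langInitEven (M : GFA T) : Set (List T) :=
  {w | ∃ x y ls f, w = x ++ y ∧ f ∈ M.accept ∧ InitEvenTrace ls ∧
    M.Chain (x, M.start, y) ls ([], f, [])}

/-- All rules read at most one symbol (IETWSFA). -/
def GFA.Simple (M : GFA T) : Prop :=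
  (∀ r ∈ M.ruleL, r.1.length ≤ 1) ∧ (∀ r ∈ M.ruleR, r.2.1.length ≤ 1)

/-- No ε-rules: every rule reads at least one symbol. -/
def GFA.EpsFree (M : GFA T) : Prop :=
  (∀ r ∈ M.ruleL, r.1 ≠ ([] : List T)) ∧ (∀ r ∈ M.ruleR, r.2.1 ≠ ([] : List T))

/-- A linear grammar: rules `A → x B y` (encoded `(A, x, some (B, y))`)
or `A → x` (encoded `(A, x, none)`). -/
structure LG (T : Type) : Type 1 where
  N : Type
  finN : Finite N
  start : N
  rules : Set (N × List T × Option (N × List T))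
  finR : rules.Finite

/-- One derivation step on sentential forms `u A v`. -/
inductive LG.Der (G : LG T) :
    List T × G.N × List T → List T × G.N × List T → Prop
  | step {u v x y : List T} {A B : G.N} (h : (A, x, some (B, y)) ∈ G.rules) :
      LG.Der G (u, A, v) (u ++ x, B, y ++ v)

/-- `L(G)`. -/
def LG.lang (G : LG T) : Set (List T) :=
  {w | ∃ u A v x, Relation.ReflTransGen G.Der ([], G.start, []) (u, A, v) ∧
    (A, x, none) ∈ G.rules ∧ w = u ++ x ++ v}

/-- Even linear grammar: `|x| = |y|` in every rule `A → x B y`. -/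
def LG.Even (G : LG T) : Prop :=
  ∀ r ∈ G.rules, ∀ B (y : List T), r.2.2 = some (B, y) → r.2.1.length = y.length


lemma step_left' {M : GFA T} {x : List T} {q : M.Q} {y : List T} {c' n}
    (h : M.Step (x, q, y) (true, n) c') :
    ∃ u a p, (a, q, p) ∈ M.ruleL ∧ n = a.length ∧ x = u ++ a ∧ c' = (u, p, y) := by
  cases h with | left h => exact ⟨_, _, _, h, rfl, rfl, rfl⟩

lemma step_right' {M : GFA T} {x : List T} {q : M.Q} {y : List T} {c' n}
    (h : M.Step (x, q, y) (false, n) c') :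
    ∃ v b p, (q, b, p) ∈ M.ruleR ∧ n = b.length ∧ y = b ++ v ∧ c' = (x, p, v) := by
  cases h with | right h => exact ⟨_, _, _, h, rfl, rfl, rfl⟩

lemma chain_nil' {M : GFA T} {c c'} (h : M.Chain c [] c') : c = c' := by
  cases h; rfl

lemma chain_cons' {M : GFA T} {c l ls c''} (h : M.Chain c (l :: ls) c'') :
    ∃ c', M.Step c l c' ∧ M.Chain c' ls c'' := by
  cases h with | cons h h' => exact ⟨_, h, h'⟩

/-- The rules of the even linear grammar simulating `M` backwards. -/
def RuleProp (M : GFA T)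
    (r : Option (M.Q × Bool) × List T × Option (Option (M.Q × Bool) × List T)) : Prop :=
  (∃ f d, f ∈ M.accept ∧ r = (none, [], some (some (f, d), []))) ∨
  (∃ a q p b p', (a, q, p) ∈ M.ruleL ∧ (p, b, p') ∈ M.ruleR ∧ a.length = b.length ∧
    r = (some (p', true), a, some (some (q, true), b))) ∨
  (∃ a q p b p', (q, b, p) ∈ M.ruleR ∧ (a, p, p') ∈ M.ruleL ∧ a.length = b.length ∧
    r = (some (p', false), a, some (some (q, false), b))) ∨
  (∃ a q d, (a, M.start, q) ∈ M.ruleL ∧ r = (some (q, d), a, none)) ∨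
  (∃ b q d, (M.start, b, q) ∈ M.ruleR ∧ r = (some (q, d), b, none))

lemma ruleProp_finite (M : GFA T) : {r | RuleProp M r}.Finite := by
  have := M.finQ
  have s1 : Set.Finite ((fun (fd : M.Q × Bool) =>
      ((none : Option (M.Q × Bool)), ([] : List T), some (some fd, ([] : List T)))) ''
      Set.univ) := (Set.finite_univ).image _
  have s2 : Set.Finite ((fun (p : (List T × M.Q × M.Q) × (M.Q × List T × M.Q)) =>
      (some (p.2.2.2, true), p.1.1, some (some (p.1.2.1, true), p.2.2.1))) ''
      (M.ruleL ×ˢ M.ruleR)) := (M.finL.prod M.finR).image _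
  have s3 : Set.Finite ((fun (p : (M.Q × List T × M.Q) × (List T × M.Q × M.Q)) =>
      (some (p.2.2.2, false), p.2.1, some (some (p.1.1, false), p.1.2.1))) ''
      (M.ruleR ×ˢ M.ruleL)) := (M.finR.prod M.finL).image _
  have s4 : Set.Finite ((fun (p : (List T × M.Q × M.Q) × Bool) =>
      (some (p.1.2.2, p.2), p.1.1, (none : Option (Option (M.Q × Bool) × List T)))) ''
      (M.ruleL ×ˢ (Set.univ : Set Bool))) := (M.finL.prod Set.finite_univ).image _
  have s5 : Set.Finite ((fun (p : (M.Q × List T × M.Q) × Bool) =>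
      (some (p.1.2.2, p.2), p.1.2.1, (none : Option (Option (M.Q × Bool) × List T)))) ''
      (M.ruleR ×ˢ (Set.univ : Set Bool))) := (M.finR.prod Set.finite_univ).image _
  refine (((((s1.union s2).union s3).union s4).union s5).subset ?_)
  rintro r (⟨f, d, hf, rfl⟩ | ⟨a, q, p, b, p', h1, h2, h3, rfl⟩ |
    ⟨a, q, p, b, p', h1, h2, h3, rfl⟩ | ⟨a, q, d, h1, rfl⟩ | ⟨b, q, d, h1, rfl⟩)
  · exact Or.inl <| Or.inl <| Or.inl <| Or.inl ⟨(f, d), trivial, rfl⟩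
  · exact Or.inl <| Or.inl <| Or.inl <| Or.inr ⟨((a, q, p), (p, b, p')), ⟨h1, h2⟩, rfl⟩
  · exact Or.inl <| Or.inl <| Or.inr ⟨((q, b, p), (a, p, p')), ⟨h1, h2⟩, rfl⟩
  · exact Or.inl <| Or.inr ⟨((a, M.start, q), d), ⟨h1, trivial⟩, rfl⟩
  · exact Or.inr ⟨((M.start, b, q), d), ⟨h1, trivial⟩, rfl⟩

/-- The even linear grammar. -/
@[reducible] def elg (M : GFA T) : LG T where
  N := Option (M.Q × Bool)
  finN := by haveI := M.finQ; exact Finite.of_equiv _ (Equiv.optionEquivSumPUnit.{0,0} _).symm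
  start := none
  rules := {r | RuleProp M r}
  finR := ruleProp_finite M

/-- Trace consisting of pairs `(d,n)(¬d,n)`. -/
inductive Pairs (d : Bool) : List (Bool × ℕ) → Prop
  | nil : Pairs d []
  | cons (n : ℕ) {ls : List (Bool × ℕ)} (h : Pairs d ls) :
      Pairs d ((d, n) :: (!d, n) :: ls)

lemma pairs_head {d ls} (h : Pairs d ls) : ∀ a ∈ ls.head?, a.1 = d := by
  cases h <;> simp

lemma getD2 (a b : Bool × ℕ) (l : List (Bool × ℕ)) (n : ℕ) :
    (a :: b :: l).getD (n + 2) (true, 0) = l.getD n (true, 0) := by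
  rw [show n + 2 = (n + 1) + 1 from rfl, List.getD_cons_succ, List.getD_cons_succ]

lemma evenTrace_of_pairs {d ls} (h : Pairs d ls) : EvenTrace ls := by
  induction h with
  | nil => exact ⟨rfl, List.isChain_nil, by simp⟩
  | @cons n ls h ih =>
    obtain ⟨h1, h2, h3⟩ := ih
    refine ⟨by simp only [List.length_cons]; omega, ?_, ?_⟩
    · refine List.isChain_cons_cons.2 ⟨by simp, List.isChain_cons.2 ⟨?_, h2⟩⟩
      intro b hb
      have := pairs_head h b hb
      simp [this]
    · intro i hi
      match i with
      | 0 => simp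
      | j + 1 =>
        have hlt : 2 * j + 1 < ls.length := by
          simp only [List.length_cons] at hi; omega
        have e1 : 2 * (j + 1) = 2 * j + 2 := by ring
        have e2 : 2 * (j + 1) + 1 = (2 * j + 1) + 2 := by ring
        rw [e2, e1, getD2, getD2]
        exact h3 j hlt

lemma pairs_of_evenTrace : ∀ ls, EvenTrace ls → ∀ d, (∀ a ∈ ls.head?, a.1 = d) → Pairs d ls
  | [], _, d, _ => Pairs.nil
  | [a], h, d, _ => by simp [EvenTrace] at h
  | (d1, n1) :: (d2, n2) :: rest, h, d, hd => by
    obtain ⟨h1, h2, h3⟩ := h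
    have hdd : d1 = d := by simpa using hd
    have h21 : d2 = !d1 := by
      have := (List.isChain_cons_cons.1 h2).1
      simp at this
      cases d1 <;> cases d2 <;> simp_all
    have hn : n1 = n2 := by simpa using h3 0 (by simp)
    have hrest : EvenTrace rest := by
      refine ⟨by simp only [List.length_cons] at h1; omega,
        ((List.isChain_cons_cons.1 h2).2).tail, ?_⟩
      intro i hi
      have hh := h3 (i + 1) (by simp only [List.length_cons]; omega)
      have e1 : 2 * (i + 1) = 2 * i + 2 := by ring
      have e2 : 2 * (i + 1) + 1 = (2 * i + 1) + 2 := by ring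
      rw [e2, e1, getD2, getD2] at hh
      exact hh
    have hhd : ∀ a ∈ rest.head?, a.1 = d := by
      intro a ha
      cases rest with
      | nil => simp at ha
      | cons b rest' =>
        have hab : b = a := by simpa using ha
        have hne : ¬ (d2 = b.1) := (List.isChain_cons_cons.1 ((List.isChain_cons_cons.1 h2).2)).1
        subst hab
        rw [h21, hdd] at hne
        cases hb : b.1 <;> cases d <;> simp_all
    have := pairs_of_evenTrace rest hrest d hhd
    subst hdd h21 hn
    exact Pairs.cons n1 this

lemma evenTrace_iff_pairs (ls) : EvenTrace ls ↔ ∃ d, Pairs d ls := by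
  constructor
  · intro h
    match ls with
    | [] => exact ⟨true, Pairs.nil⟩
    | a :: rest => exact ⟨a.1, pairs_of_evenTrace _ h a.1 (by simp)⟩
  · rintro ⟨d, h⟩; exact evenTrace_of_pairs h


lemma der_of_chain (M : GFA T) {f : M.Q} {d : Bool} (hf : f ∈ M.accept) :
    ∀ {ls} {x : List T} {q : M.Q} {y : List T}, Pairs d ls →
      M.Chain (x, q, y) ls ([], f, []) →
      Relation.ReflTransGen (elg M).Der ([], (elg M).start, []) (x, some (q, d), y) := by
  intro ls x q y hp
  induction hp generalizing x q y with
  | nil =>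
    intro hc
    have h := chain_nil' hc
    obtain ⟨rfl, rfl, rfl⟩ : x = [] ∧ q = f ∧ y = [] := by simpa [Prod.ext_iff] using h
    have hr : ((none : (elg M).N), ([] : List T),
        some ((some (q, d) : (elg M).N), ([] : List T))) ∈ (elg M).rules :=
      Or.inl ⟨q, d, hf, rfl⟩
    have := Relation.ReflTransGen.single (LG.Der.step (u := []) (v := []) hr)
    simpa using this
  | @cons n ls hp ih =>
    intro hc
    obtain ⟨c1, hs1, hc1⟩ := chain_cons' hc
    obtain ⟨c2, hs2, hc2⟩ := chain_cons' hc1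
    cases d with
    | true =>
      obtain ⟨u, a, p, hL, hn, rfl, rfl⟩ := step_left' hs1
      obtain ⟨v, b, p', hR, hn', rfl, rfl⟩ := step_right' (by simpa using hs2)
      have hder := ih hc2
      have hr : ((some (p', true) : (elg M).N), a,
          some ((some (q, true) : (elg M).N), b)) ∈ (elg M).rules :=
        Or.inr (Or.inl ⟨a, q, p, b, p', hL, hR, by omega, rfl⟩)
      exact hder.tail (LG.Der.step hr)
    | false =>
      obtain ⟨v, b, p, hR, hn, rfl, rfl⟩ := step_right' hs1
      obtain ⟨u, a, p', hL, hn', rfl, rfl⟩ := step_left' (by simpa using hs2)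
      have hder := ih hc2
      have hr : ((some (p', false) : (elg M).N), a,
          some ((some (q, false) : (elg M).N), b)) ∈ (elg M).rules :=
        Or.inr (Or.inr (Or.inl ⟨a, q, p, b, p', hR, hL, by omega, rfl⟩))
      exact hder.tail (LG.Der.step hr)

lemma chain_of_der (M : GFA T) {c} :
    Relation.ReflTransGen (elg M).Der ([], (elg M).start, []) c →
    c = ([], (elg M).start, []) ∨
      ∃ (u : List T) (q : M.Q) (d : Bool) (v : List T) (f : M.Q) (ls : List (Bool × ℕ)), c = (u, some (q, d), v) ∧ f ∈ M.accept ∧ Pairs d ls ∧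
        M.Chain (u, q, v) ls ([], f, []) := by
  intro h
  induction h with
  | refl => exact Or.inl rfl
  | tail hab hbc ih =>
    cases hbc with
    | @step u v x y A B hr =>
      rcases hr with ⟨f, d, hf, heq⟩ | ⟨a, q, p, b, p', hL, hR, hlen, heq⟩ |
        ⟨a, q, p, b, p', hR, hL, hlen, heq⟩ | ⟨a, q, d, h1, heq⟩ | ⟨b, q, d, h1, heq⟩
      · simp only [Prod.mk.injEq, Option.some.injEq] at heq
        obtain ⟨rfl, rfl, rfl, rfl⟩ := heq
        rcases ih with h | ⟨u', q', d', v', f', ls', hc, _⟩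
        · obtain ⟨rfl, rfl⟩ : u = [] ∧ v = [] := by
            simpa [elg, Prod.ext_iff] using h
          exact Or.inr ⟨[], f, d, [], f, [], by simp, hf, Pairs.nil, GFA.Chain.nil _⟩
        · exfalso; simp [Prod.ext_iff] at hc
      · simp only [Prod.mk.injEq, Option.some.injEq] at heq
        obtain ⟨rfl, rfl, rfl, rfl⟩ := heq
        rcases ih with h | ⟨u', q'', d', v', f', ls', hc, hf', hpp, hchain⟩
        · exfalso; simp [elg, Prod.ext_iff] at h
        · simp only [Prod.mk.injEq, Option.some.injEq] at hc
          obtain ⟨rfl, ⟨rfl, rfl⟩, rfl⟩ := hc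
          have step1 : M.Step (u ++ x, q, y ++ v) (true, x.length) (u, p, y ++ v) :=
            GFA.Step.left hL
          have step2 : M.Step (u, p, y ++ v) (false, y.length) (u, p', v) :=
            GFA.Step.right hR
          have chain' := GFA.Chain.cons step1 (GFA.Chain.cons step2 hchain)
          rw [← hlen] at chain'
          have hp2 : Pairs true ((true, x.length) :: (false, x.length) :: ls') := by
            simpa using Pairs.cons x.length hpp
          exact Or.inr ⟨u ++ x, q, true, y ++ v, f', _, rfl, hf', hp2, chain'⟩
      · simp only [Prod.mk.injEq, Option.some.injEq] at heq
        obtain ⟨rfl, rfl, rfl, rfl⟩ := heq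
        rcases ih with h | ⟨u', q'', d', v', f', ls', hc, hf', hpp, hchain⟩
        · exfalso; simp [elg, Prod.ext_iff] at h
        · simp only [Prod.mk.injEq, Option.some.injEq] at hc
          obtain ⟨rfl, ⟨rfl, rfl⟩, rfl⟩ := hc
          have step1 : M.Step (u ++ x, q, y ++ v) (false, y.length) (u ++ x, p, v) :=
            GFA.Step.right hR
          have step2 : M.Step (u ++ x, p, v) (true, x.length) (u, p', v) :=
            GFA.Step.left hL
          have chain' := GFA.Chain.cons step1 (GFA.Chain.cons step2 hchain)
          rw [hlen] at chain'
          have hp2 : Pairs false ((false, y.length) :: (true, y.length) :: ls') := by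
            simpa using Pairs.cons y.length hpp
          exact Or.inr ⟨u ++ x, q, false, y ++ v, f', _, rfl, hf', hp2, chain'⟩
      · exfalso; simp at heq
      · exfalso; simp at heq


theorem initeven_ietwgfa_to_elg {T : Type} (M : GFA T) :
    ∃ G : LG T, G.Even ∧ G.lang = M.langInitEven := by
  refine ⟨elg M, ?_, ?_⟩
  · rintro r (⟨f, d, hf, rfl⟩ | ⟨a, q, p, b, p', h1, h2, h3, rfl⟩ |
      ⟨a, q, p, b, p', h1, h2, h3, rfl⟩ | ⟨a, q, d, h1, rfl⟩ | ⟨b, q, d, h1, rfl⟩) B y heq <;>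
      simp_all
  · ext w
    simp only [LG.lang, GFA.langInitEven, Set.mem_setOf_eq]
    constructor
    · rintro ⟨u, A, v, x, hder, hterm, rfl⟩
      rcases hterm with ⟨f, d, hf, heq⟩ | ⟨a, q, p, b, p', _, _, _, heq⟩ |
        ⟨a, q, p, b, p', _, _, _, heq⟩ | ⟨a, q, d, h1, heq⟩ | ⟨b, q, d, h1, heq⟩
      · exact absurd heq (by simp)
      · exact absurd heq (by simp)
      · exact absurd heq (by simp)
      · simp only [Prod.mk.injEq] at heq
        obtain ⟨rfl, rfl, -⟩ := heq
        rcases chain_of_der M hder with h | ⟨u', q', d', v', f, ls, hc, hf, hp, hchain⟩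
        · exact absurd h (by simp [elg, Prod.ext_iff])
        · simp only [Prod.mk.injEq, Option.some.injEq] at hc
          obtain ⟨rfl, ⟨rfl, rfl⟩, rfl⟩ := hc
          exact ⟨u ++ x, v, (true, x.length) :: ls, f, rfl, hf,
            ⟨_, ls, rfl, evenTrace_of_pairs hp⟩,
            GFA.Chain.cons (GFA.Step.left h1) hchain⟩
      · simp only [Prod.mk.injEq] at heq
        obtain ⟨rfl, rfl, -⟩ := heq
        rcases chain_of_der M hder with h | ⟨u', q', d', v', f, ls, hc, hf, hp, hchain⟩
        · exact absurd h (by simp [elg, Prod.ext_iff])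
        · simp only [Prod.mk.injEq, Option.some.injEq] at hc
          obtain ⟨rfl, ⟨rfl, rfl⟩, rfl⟩ := hc
          exact ⟨u, x ++ v, (false, x.length) :: ls, f, List.append_assoc u x v, hf,
            ⟨_, ls, rfl, evenTrace_of_pairs hp⟩,
            GFA.Chain.cons (GFA.Step.right h1) hchain⟩
    · rintro ⟨x, y, ls, f, rfl, hf, ⟨l, ls', rfl, hev⟩, hchain⟩
      obtain ⟨d, hp⟩ := (evenTrace_iff_pairs ls').1 hev
      obtain ⟨c1, hs1, hc1⟩ := chain_cons' hchain
      obtain ⟨dir, n⟩ := l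
      cases dir with
      | false =>
        obtain ⟨v, b, q1, hR, hn, rfl, rfl⟩ := step_right' hs1
        exact ⟨x, some (q1, d), v, b, der_of_chain M hf hp hc1,
          Or.inr (Or.inr (Or.inr (Or.inr ⟨b, q1, d, hR, rfl⟩))),
          (List.append_assoc x b v).symm⟩
      | true =>
        obtain ⟨u, a, q1, hL, hn, rfl, rfl⟩ := step_left' hs1
        exact ⟨u, some (q1, d), y, a, der_of_chain M hf hp hc1,
          Or.inr (Or.inr (Or.inr (Or.inl ⟨a, q1, d, hL, rfl⟩))),
          by rw [List.append_assoc]⟩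


end IETW
end

section
/- For every even linear grammar G, there exists an IETWGFA M such that L(M)_init-even = L(G). -/
namespace IETW

variable {T : Type}

/-- State type of the simulating automaton. -/
def MQ (G : LG T) : Type := Option (G.N ⊕ {r // r ∈ G.rules})

/-- Left rules, one per grammar rule. -/
def fL (G : LG T) (r : {r // r ∈ G.rules}) : List T × MQ G × MQ G :=
  match r.1.2.2 with
  | none => (r.1.2.1, none, some (Sum.inl r.1.1))
  | some (B, _) => (r.1.2.1, some (Sum.inl B), some (Sum.inr r))

/-- Right rules, one per non-terminating grammar rule. -/
def fR (G : LG T) (r : {r // r ∈ G.rules}) : Option (MQ G × List T × MQ G) :=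
  match r.1.2.2 with
  | none => none
  | some (_, b) => some (some (Sum.inr r), b, some (Sum.inl r.1.1))

/-- The simulating automaton. -/
def mkM (G : LG T) : GFA T where
  Q := MQ G
  finQ := by
    have h1 : Finite {r // r ∈ G.rules} := G.finR.to_subtype
    have h2 : Finite (G.N ⊕ {r // r ∈ G.rules}) := by
      have := G.finN; infer_instance
    exact Finite.of_equiv _ (Equiv.optionEquivSumPUnit.{0,0} _).symm
  start := none
  accept := {some (Sum.inl G.start)}
  ruleL := Set.range (fL G)
  ruleR := Option.some ⁻¹' Set.range (fR G)
  finL := by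
    have := G.finR.to_subtype
    exact Set.finite_range _
  finR := by
    have := G.finR.to_subtype
    exact (Set.finite_range (fR G)).preimage (Option.some_injective _).injOn

/-- Invariant for configurations of `mkM G` from which the final accepting
configuration is reachable. -/
def Good (G : LG T) : List T × MQ G × List T → Prop
  | (_, none, _) => True
  | (u, some (Sum.inl A), v) => Relation.ReflTransGen G.Der ([], G.start, []) (u, A, v)
  | (u, some (Sum.inr r), v) => ∀ B b, r.1.2.2 = some (B, b) → ∃ v₀, v = b ++ v₀ ∧
      Relation.ReflTransGen G.Der ([], G.start, []) (u, r.1.1, v₀)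

lemma good_of_chain' (G : LG T) {c d : List T × (mkM G).Q × List T} {ls}
    (h : (mkM G).Chain c ls d)
    (hd : d = (([] : List T), some (Sum.inl G.start), ([] : List T))) :
    Good G c := by
  induction h with
  | nil => subst hd; simp only [Good]; exact Relation.ReflTransGen.refl
  | cons st ch ih =>
    have ih := ih hd
    cases st with
    | left hrule =>
      obtain ⟨r, hr⟩ := hrule
      rcases h2 : r.1.2.2 with _ | ⟨B, b⟩
      · simp only [fL, h2] at hr
        injection hr with hx hr2
        injection hr2 with hq hp
        rw [← hq]
        exact trivial
      · simp only [fL, h2] at hr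
        injection hr with hx hr2
        injection hr2 with hq hp
        subst hx
        rw [← hq] at *
        rw [← hp] at ih
        simp only [Good]
        simp only [Good] at ih
        obtain ⟨v₀, rfl, hder⟩ := ih B b h2
        have hrl : (r.1.1, r.1.2.1, some (B, b)) ∈ G.rules := by
          have : r.1 = (r.1.1, r.1.2.1, r.1.2.2) := rfl
          rw [← h2]; rw [← this]; exact r.2
        exact Relation.ReflTransGen.tail hder (LG.Der.step hrl)
    | right hrule =>
      obtain ⟨r, hr⟩ := hrule
      rcases h2 : r.1.2.2 with _ | ⟨B, b⟩
      · simp [fR, h2] at hr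
      · simp only [fR, h2, Option.some.injEq] at hr
        injection hr with hr
        injection hr with hq hr2
        injection hr2 with hx hp
        subst hx
        rw [← hq]
        rw [← hp] at ih
        simp only [Good]
        intro B' b' hB'
        rw [h2] at hB'
        injection hB' with hBb
        injection hBb with hB hb
        subst hb
        exact ⟨_, rfl, ih⟩

lemma good_of_chain (G : LG T) {c : List T × MQ G × List T} {ls}
    (h : (mkM G).Chain c ls (([] : List T), some (Sum.inl G.start), ([] : List T))) :
    Good G c := good_of_chain' G h rfl

lemma evenTrace_nil : EvenTrace ([] : List (Bool × ℕ)) :=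
  ⟨rfl, List.isChain_nil, fun i hi => by simp at hi⟩

lemma evenTrace_cons2 {n : ℕ} {ls : List (Bool × ℕ)} (h : EvenTrace ls)
    (hh : ∀ b k, ls.head? = some (b, k) → b = true) :
    EvenTrace ((true, n) :: (false, n) :: ls) := by
  obtain ⟨h1, h2, h3⟩ := h
  refine ⟨by simp only [List.length_cons]; omega, ?_, ?_⟩
  · rw [Alternating, List.Chain', List.isChain_cons_cons]
    refine ⟨by simp, ?_⟩
    cases ls with
    | nil => simp [Alternating]
    | cons a t =>
      rw [List.isChain_cons_cons]
      have ha : a.1 = true := hh a.1 a.2 (by simp)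
      exact ⟨by simp [ha], h2⟩
  · intro i hi
    cases i with
    | zero => simp
    | succ j =>
      rw [show 2 * (j + 1) = 2 * j + 1 + 1 from by ring]
      simp only [List.getD_cons_succ]
      exact h3 j (by simp only [List.length_cons] at hi; omega)

lemma chain_of_der_s11 (G : LG T) (hG : G.Even) :
    ∀ {c : List T × G.N × List T},
      Relation.ReflTransGen G.Der ([], G.start, []) c →
      ∃ ls, (mkM G).Chain (c.1, some (Sum.inl c.2.1), c.2.2) ls
          (([] : List T), some (Sum.inl G.start), ([] : List T)) ∧
        EvenTrace ls ∧ ∀ b k, ls.head? = some (b, k) → b = true := by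
  intro c h
  induction h with
  | refl => exact ⟨[], GFA.Chain.nil _, evenTrace_nil, fun b k hk => by simp at hk⟩
  | tail _ hstep ih =>
    obtain ⟨ls', hch, hev, hhd⟩ := ih
    cases hstep with
    | @step u v x y A B hrl =>
      have hlen : x.length = y.length := hG _ hrl B y rfl
      have hL : (x, some (Sum.inl B), some (Sum.inr ⟨(A, x, some (B, y)), hrl⟩))
          ∈ (mkM G).ruleL := by
        exact ⟨⟨(A, x, some (B, y)), hrl⟩, rfl⟩
      have hR : ((some (Sum.inr ⟨(A, x, some (B, y)), hrl⟩) : MQ G), y, some (Sum.inl A))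
          ∈ (mkM G).ruleR := by
        exact ⟨⟨(A, x, some (B, y)), hrl⟩, rfl⟩
      refine ⟨(true, x.length) :: (false, y.length) :: ls', ?_, ?_, by simp⟩
      · exact GFA.Chain.cons (GFA.Step.left hL)
          (GFA.Chain.cons (GFA.Step.right hR) hch)
      · rw [hlen]
        exact evenTrace_cons2 hev hhd

theorem elg_to_initeven_ietwgfa {T : Type} (G : LG T) (hG : G.Even) :
    ∃ M : GFA T, M.langInitEven = G.lang := by
  refine ⟨mkM G, Set.ext fun w => ⟨?_, ?_⟩⟩
  · rintro ⟨x, y, ls, f, rfl, hf, _, hchain⟩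
    have hfe : f = some (Sum.inl G.start) := hf
    subst hfe
    cases hchain with
    | cons st ch =>
      cases st with
      | left hrule =>
        obtain ⟨r, hr⟩ := hrule
        rcases h2 : r.1.2.2 with _ | ⟨B, b⟩
        · simp only [fL, h2] at hr
          injection hr with hx hr2
          injection hr2 with hq hp
          subst hx
          subst hp
          have hgood := good_of_chain G ch
          simp only [Good] at hgood
          have hrl : (r.1.1, r.1.2.1, none) ∈ G.rules := by
            have : r.1 = (r.1.1, r.1.2.1, r.1.2.2) := rfl
            rw [← h2]; rw [← this]; exact r.2
          exact ⟨_, _, _, _, hgood, hrl, rfl⟩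
        · simp [fL, h2, mkM] at hr
          exact absurd (congrArg Prod.fst hr.2) (Option.some_ne_none _)
      | right hrule =>
        obtain ⟨r, hr⟩ := hrule
        rcases h2 : r.1.2.2 with _ | ⟨B, b⟩
        · simp [fR, h2, mkM] at hr
        · simp [fR, h2, mkM] at hr
          exact absurd (congrArg Prod.fst hr) (Option.some_ne_none _)
  · rintro ⟨u, A, v, x, hder, hrl, rfl⟩
    obtain ⟨ls', hch, hev, _⟩ := chain_of_der_s11 G hG hder
    have hL : (x, (none : MQ G), some (Sum.inl A)) ∈ (mkM G).ruleL :=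
      ⟨⟨(A, x, none), hrl⟩, rfl⟩
    refine ⟨u ++ x, v, (true, x.length) :: ls', some (Sum.inl G.start),
      rfl, rfl, ⟨_, _, rfl, hev⟩, ?_⟩
    exact GFA.Chain.cons (GFA.Step.left hL) hch

end IETW
end

section
/- The family of languages accepted by IETWGFAs under even computation is strictly contained in the family accepted by IETWGFAs under initialized even computation. -/
namespace IETW

variable {T : Type}

namespace Aux

variable {T : Type}

lemma chain_length {M : GFA T} {c c' : List T × M.Q × List T} {ls : List (Bool × ℕ)}
    (h : M.Chain c ls c') :
    c.1.length + c.2.2.length = (ls.map Prod.snd).sum + c'.1.length + c'.2.2.length := by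
  induction h with
  | nil => simp
  | cons hst _ ih =>
    cases hst with
    | left h => simp at ih ⊢; omega
    | right h => simp at ih ⊢; omega

lemma evenTrace_cons_cons {a b : Bool × ℕ} {ls : List (Bool × ℕ)}
    (h : EvenTrace (a :: b :: ls)) : a.2 = b.2 ∧ EvenTrace ls := by
  obtain ⟨h1, h2, h3⟩ := h
  refine ⟨by simpa using h3 0 (by simp), ?_, ?_, ?_⟩
  · simp only [List.length_cons] at h1 ⊢; omega
  · exact (h2.tail).tail
  · intro i hi
    have := h3 (i + 1) (by simp at hi ⊢; omega)
    simpa [List.getD, Nat.mul_add] using this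

lemma evenTrace_sum : ∀ {ls : List (Bool × ℕ)}, EvenTrace ls → (ls.map Prod.snd).sum % 2 = 0
  | [], _ => by simp
  | [a], h => by simp [EvenTrace] at h
  | a :: b :: rest, h => by
    obtain ⟨hab, hrest⟩ := evenTrace_cons_cons h
    have := evenTrace_sum hrest
    simp only [List.map_cons, List.sum_cons]
    omega

lemma langEven_even {M : GFA T} {w : List T} (h : w ∈ M.langEven) : w.length % 2 = 0 := by
  obtain ⟨x, y, ls, f, rfl, _, het, hch⟩ := h
  have h1 := chain_length hch
  have h2 := evenTrace_sum het
  simp only [List.length_nil] at h1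
  rw [List.length_append]
  omega

/-- Add a fresh start state with an ε-move to the old start. -/
def addInit (M : GFA T) : GFA T where
  Q := Option M.Q
  finQ := by
    have := M.finQ
    exact Finite.of_equiv _ (Equiv.optionEquivSumPUnit.{0,0} M.Q).symm
  start := none
  accept := {q | ∃ q0 ∈ M.accept, q = some q0}
  ruleL := (fun r => (r.1, some r.2.1, some r.2.2)) '' M.ruleL
  ruleR := (fun r => (some r.1, r.2.1, some r.2.2)) '' M.ruleR ∪ {(none, [], some M.start)}
  finL := M.finL.image _
  finR := (M.finR.image _).union (Set.finite_singleton _)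

lemma lift_chain {M : GFA T} {x y x' y' : List T} {q q' : M.Q} {ls : List (Bool × ℕ)}
    (h : M.Chain (x, q, y) ls (x', q', y')) :
    (addInit M).Chain (x, some q, y) ls (x', some q', y') := by
  generalize hc : (x, q, y) = c at h
  generalize hc' : (x', q', y') = c' at h
  induction h generalizing x y q with
  | nil c =>
    cases hc
    simp only [Prod.mk.injEq] at hc'
    obtain ⟨rfl, rfl, rfl⟩ := hc'
    exact GFA.Chain.nil _
  | cons hst hch ih =>
    cases hc
    cases hst with
    | @left u v x0 qq p h =>
      exact GFA.Chain.cons (GFA.Step.left (M := addInit M) ⟨_, h, rfl⟩) (ih rfl hc')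
    | @right u v x0 qq p h =>
      exact GFA.Chain.cons (GFA.Step.right (M := addInit M) (Or.inl ⟨_, h, rfl⟩)) (ih rfl hc')

lemma unlift_chain {M : GFA T} {x y x' y' : List T} {q : M.Q} {q' : Option M.Q}
    {ls : List (Bool × ℕ)}
    (h : (addInit M).Chain (x, some q, y) ls (x', q', y')) :
    ∃ q0', q' = some q0' ∧ M.Chain (x, q, y) ls (x', q0', y') := by
  generalize hc : ((x, some q, y) : List T × (addInit M).Q × List T) = c at h
  generalize hc' : ((x', q', y') : List T × (addInit M).Q × List T) = c' at h
  induction h generalizing x y q with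
  | nil c =>
    cases hc
    simp only [Prod.mk.injEq] at hc'
    obtain ⟨rfl, rfl, rfl⟩ := hc'
    exact ⟨q, rfl, GFA.Chain.nil _⟩
  | cons hst hch ih =>
    cases hc
    cases hst with
    | @left u v x0 qq p h =>
      obtain ⟨⟨x1, q1, p1⟩, hr, hre⟩ := h
      cases hre
      obtain ⟨q0', rfl, hch'⟩ := ih rfl hc'
      exact ⟨q0', rfl, GFA.Chain.cons (GFA.Step.left hr) hch'⟩
    | @right u v x0 qq p h =>
      cases h with
      | inl h =>
        obtain ⟨⟨q1, x1, p1⟩, hr, hre⟩ := h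
        cases hre
        obtain ⟨q0', rfl, hch'⟩ := ih rfl hc'
        exact ⟨q0', rfl, GFA.Chain.cons (GFA.Step.right hr) hch'⟩
      | inr h => cases h

lemma addInit_langInitEven (M : GFA T) : (addInit M).langInitEven = M.langEven := by
  ext w
  constructor
  · rintro ⟨x, y, ls, f, rfl, hf, ⟨l, ls', rfl, hev⟩, hch⟩
    obtain ⟨f0, hf0, rfl⟩ := hf
    cases hch with
    | cons hst hch' =>
      cases hst with
      | @left u v x0 qq p h =>
        obtain ⟨⟨x1, q1, p1⟩, hr, hre⟩ := h
        cases hre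
      | @right u v x0 qq p h =>
        cases h with
        | inl h =>
          obtain ⟨⟨q1, x1, p1⟩, hr, hre⟩ := h
          cases hre
        | inr h =>
          cases h
          obtain ⟨q0', hq0, hch''⟩ := unlift_chain hch'
          obtain rfl : f0 = q0' := by simpa using hq0
          exact ⟨x, v, ls', f0, by simp, hf0, hev, hch''⟩
  · rintro ⟨x, y, ls, f, rfl, hf, hev, hch⟩
    refine ⟨x, y, (false, 0) :: ls, some f, rfl, ⟨f, hf, rfl⟩, ⟨_, _, rfl, hev⟩, ?_⟩
    exact GFA.Chain.cons
      (GFA.Step.right (M := addInit M) (x := []) (Or.inr rfl)) (lift_chain hch)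

/-- The machine accepting exactly `[a]`. -/
def oneM (a : T) : GFA T where
  Q := Bool
  finQ := inferInstance
  start := false
  accept := {true}
  ruleL := ∅
  ruleR := {(false, [a], true)}
  finL := Set.finite_empty
  finR := Set.finite_singleton _

lemma oneM_chain_true {a : T} {x y x' y' : List T} {q' : Bool} {ls : List (Bool × ℕ)}
    (h : (oneM a).Chain (x, true, y) ls (x', q', y')) : x = x' ∧ y = y' ∧ q' = true := by
  cases h with
  | nil => exact ⟨rfl, rfl, rfl⟩
  | cons hst hch =>
    cases hst with
    | left h => exact absurd h (by simp [oneM]; exact fun h => h)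
    | right h => simp [oneM] at h; cases h

lemma oneM_langInitEven (a : T) : (oneM a).langInitEven = {[a]} := by
  ext w
  constructor
  · rintro ⟨x, y, ls, f, rfl, hf, _, hch⟩
    have hf' : f = true := hf
    subst hf'
    cases hch with
    | cons hst hch' =>
      cases hst with
      | left h => exact absurd h (by simp [oneM]; exact fun h => h)
      | @right u v x0 qq p h =>
        simp only [oneM, Set.mem_singleton_iff, Prod.mk.injEq] at h
        obtain ⟨-, rfl, rfl⟩ := h
        obtain ⟨h1, h2, -⟩ := oneM_chain_true hch'
        subst h1
        subst h2
        rfl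
  · rintro rfl
    refine ⟨[], [a], [(false, 1)], true, rfl, rfl,
      ⟨(false, 1), [], rfl, rfl, List.isChain_nil, by simp⟩, ?_⟩
    have : ((oneM a).Step ([], false, [a] ++ []) (false, ([a] : List T).length) ([], true, [])) :=
      GFA.Step.right (M := oneM a) rfl
    exact GFA.Chain.cons (by simpa [oneM] using this) (GFA.Chain.nil _)

end Aux

theorem even_family_ssubset_initeven_family (T : Type) [Nonempty T] :
    {L : Set (List T) | ∃ M : GFA T, M.langEven = L} ⊂
      {L : Set (List T) | ∃ M : GFA T, M.langInitEven = L} := by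
  constructor
  · rintro L ⟨M, rfl⟩
    exact ⟨Aux.addInit M, Aux.addInit_langInitEven M⟩
  · intro hsub
    obtain ⟨a⟩ := ‹Nonempty T›
    have h1 : ({[a]} : Set (List T)) ∈
        {L : Set (List T) | ∃ M : GFA T, M.langInitEven = L} :=
      ⟨Aux.oneM a, Aux.oneM_langInitEven a⟩
    obtain ⟨M, hM⟩ := hsub h1
    have : ([a] : List T) ∈ M.langEven := by rw [hM]; rfl
    have := Aux.langEven_even this
    simp at this

end IETW
end

section
/- Every language accepted by an ε-free IETWSFA under initialized even computation consists only of odd-length strings, and this inclusion into the family of odd-length-string languages is strict. -/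
namespace IETW

variable {T : Type}

section Aux

variable {M : GFA T}

lemma chain_shrink {c c' : List T × M.Q × List T} {ls} (h : M.Chain c ls c') :
    c'.1 <+: c.1 ∧ c'.2.2 <:+ c.2.2 := by
  induction h with
  | nil => exact ⟨List.prefix_refl _, List.suffix_refl _⟩
  | cons hs _ ih =>
    cases hs with
    | left h => exact ⟨ih.1.trans (List.prefix_append _ _), ih.2⟩
    | right h => exact ⟨ih.1, ih.2.trans (List.suffix_append _ _)⟩

lemma chain_len (hS : M.Simple) (hE : M.EpsFree) {c c' : List T × M.Q × List T} {ls}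
    (h : M.Chain c ls c') :
    c.1.length + c.2.2.length = ls.length + (c'.1.length + c'.2.2.length) := by
  induction h with
  | nil => simp
  | cons hs _ ih =>
    cases hs with
    | @left u v x q p h =>
      have h1 : x.length ≤ 1 := hS.1 _ h
      have h3 : 0 < x.length := List.length_pos_iff.2 (hE.1 _ h)
      simp only [List.length_append, List.length_cons] at *
      omega
    | @right u v x q p h =>
      have h1 : x.length ≤ 1 := hS.2 _ h
      have h3 : 0 < x.length := List.length_pos_iff.2 (hE.2 _ h)
      simp only [List.length_append, List.length_cons] at *
      omega

lemma chain_labels (hS : M.Simple) (hE : M.EpsFree) {c c' : List T × M.Q × List T} {ls}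
    (h : M.Chain c ls c') : ∀ l ∈ ls, l.2 = 1 := by
  induction h with
  | nil => intro l hl; simp at hl
  | cons hs _ ih =>
    intro l hl
    rcases List.mem_cons.1 hl with rfl | hl
    · cases hs with
      | @left u v x q p h =>
        have h1 : x.length ≤ 1 := hS.1 _ h
        have h3 : 0 < x.length := List.length_pos_iff.2 (hE.1 _ h)
        show x.length = 1
        omega
      | @right u v x q p h =>
        have h1 : x.length ≤ 1 := hS.2 _ h
        have h3 : 0 < x.length := List.length_pos_iff.2 (hE.2 _ h)
        show x.length = 1
        omega
    · exact ih l hl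

lemma chain_append {c c' c'' : List T × M.Q × List T} {l1 l2} :
    M.Chain c l1 c' → M.Chain c' l2 c'' → M.Chain c (l1 ++ l2) c'' := by
  intro h1
  induction h1 with
  | nil => intro h2; simpa using h2
  | cons hs _ ih => intro h2; exact .cons hs (ih h2)

lemma chain_decompose {c c' : List T × M.Q × List T} {ls} (h : M.Chain c ls c') :
    ∃ g : ℕ → List T × M.Q × List T, g 0 = c ∧ g ls.length = c' ∧
      ∀ m < ls.length, M.Step (g m) (ls.getD m (true, 0)) (g (m + 1)) := by
  induction h with
  | nil c => exact ⟨fun _ => c, rfl, rfl, by simp⟩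
  | @cons c cm c'' l ls hs h' ih =>
    obtain ⟨g, hg0, hgl, hgs⟩ := ih
    refine ⟨fun m => match m with | 0 => c | (m + 1) => g m, rfl, ?_, ?_⟩
    · show g ls.length = c''
      exact hgl
    · intro m hm
      match m with
      | 0 =>
        show M.Step c ((l :: ls).getD 0 (true, 0)) (g 0)
        rw [hg0]
        exact hs
      | (m + 1) =>
        show M.Step (g m) ((l :: ls).getD (m + 1) (true, 0)) (g (m + 1))
        rw [List.getD_cons_succ]
        exact hgs m (by simpa using hm)

lemma chain_recompose (g : ℕ → List T × M.Q × List T) (ls : List (Bool × ℕ))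
    (hstep : ∀ m < ls.length, M.Step (g m) (ls.getD m (true, 0)) (g (m + 1)))
    {i j : ℕ} (hij : i ≤ j) (hj : j ≤ ls.length) :
    M.Chain (g i) ((ls.drop i).take (j - i)) (g j) := by
  revert hj
  induction j, hij using Nat.le_induction with
  | base =>
    intro _
    rw [Nat.sub_self, List.take_zero]
    exact .nil _
  | succ j hij ih =>
    intro hj1
    have hjlt : j < ls.length := by omega
    have h1 := ih (by omega)
    have h2 : M.Chain (g j) [ls.getD j (true, 0)] (g (j + 1)) :=
      .cons (hstep j hjlt) (.nil _)
    have h3 := chain_append h1 h2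
    have he : (ls.drop i).take (j + 1 - i) = (ls.drop i).take (j - i) ++ [ls.getD j (true, 0)] := by
      have hk : j + 1 - i = (j - i) + 1 := by omega
      rw [hk, List.take_succ]
      congr 1
      have h4 : (ls.drop i)[j - i]? = ls[j]? := by
        rw [List.getElem?_drop]
        congr 1
        omega
      rw [h4]
      simp [List.getElem?_eq_getElem hjlt, List.getD_eq_getElem _ _ hjlt]
    rw [he]
    exact h3

lemma chain_nil_inv {c c' : List T × M.Q × List T} (h : M.Chain c [] c') : c = c' := by
  cases h; rfl

lemma chain_cons_inv {c c' : List T × M.Q × List T} {l ls} (h : M.Chain c (l :: ls) c') :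
    ∃ cm, M.Step c l cm ∧ M.Chain cm ls c' := by
  cases h with
  | cons hs h' => exact ⟨_, hs, h'⟩

lemma step_cases {c c' : List T × M.Q × List T} {l} (h : M.Step c l c') :
    (∃ x, (x, c.2.1, c'.2.1) ∈ M.ruleL ∧ c.1 = c'.1 ++ x ∧ c.2.2 = c'.2.2 ∧
      l = (true, x.length)) ∨
    (∃ x, (c.2.1, x, c'.2.1) ∈ M.ruleR ∧ c.2.2 = x ++ c'.2.2 ∧ c.1 = c'.1 ∧
      l = (false, x.length)) := by
  cases h with
  | left h => exact Or.inl ⟨_, h, rfl, rfl, rfl⟩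
  | right h => exact Or.inr ⟨_, h, rfl, rfl, rfl⟩

lemma chain_translate {q q' : M.Q} (ls : List (Bool × ℕ)) :
    ∀ {A B e f : List T}, M.Chain (A ++ e, q, f ++ B) ls (A, q', B) →
      ∀ (A' B' : List T), M.Chain (A' ++ e, q, f ++ B') ls (A', q', B') := by
  induction ls generalizing q with
  | nil =>
    intro A B e f h A' B'
    have h0 := chain_nil_inv h
    have h1 : A ++ e = A := congrArg Prod.fst h0
    have h2 : q = q' := congrArg (fun c => c.2.1) h0
    have h3 : f ++ B = B := congrArg (fun c => c.2.2) h0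
    have he : e = [] := by
      have h4 : A ++ e = A ++ [] := by simpa using h1
      exact List.append_cancel_left h4
    have hf : f = [] := by
      have h4 : f ++ B = [] ++ B := by simpa using h3
      exact List.append_cancel_right h4
    subst he hf h2
    simpa using GFA.Chain.nil (A', q, B')
  | cons l ls ih =>
    intro A B e f h A' B'
    obtain ⟨cm, hs, h'⟩ := chain_cons_inv h
    obtain ⟨cm1, cmq, cm2⟩ := cm
    have hshr := chain_shrink h'
    rcases step_cases hs with ⟨x, hrule, h1, h2, rfl⟩ | ⟨x, hrule, h1, h2, rfl⟩
    · -- left move: h1 : A ++ e = cm1 ++ x, h2 : f ++ B = cm2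
      dsimp only at h1 h2 hrule
      obtain ⟨e₁, he₁⟩ : A <+: cm1 := by simpa using hshr.1
      have hee : e = e₁ ++ x := by
        have h4 : A ++ e = A ++ (e₁ ++ x) := by rw [h1, ← he₁, List.append_assoc]
        exact List.append_cancel_left h4
      rw [← he₁, ← h2] at h'
      have hstep : M.Step ((A' ++ e₁) ++ x, q, f ++ B') (true, x.length)
          (A' ++ e₁, cmq, f ++ B') := .left hrule
      have hch := GFA.Chain.cons hstep (ih h' A' B')
      rw [hee, ← List.append_assoc]
      exact hch
    · -- right move: h1 : f ++ B = x ++ cm2, h2 : A ++ e = cm1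
      dsimp only at h1 h2 hrule
      obtain ⟨f₁, hf₁⟩ : B <:+ cm2 := by simpa using hshr.2
      have hff : f = (x ++ f₁) := by
        have h4 : f ++ B = (x ++ f₁) ++ B := by rw [h1, ← hf₁, List.append_assoc]
        exact List.append_cancel_right h4
      rw [← h2, ← hf₁] at h'
      have hstep : M.Step (A' ++ e, q, x ++ (f₁ ++ B')) (false, x.length)
          (A' ++ e, cmq, f₁ ++ B') := .right hrule
      have hch := GFA.Chain.cons hstep (ih h' A' B')
      rw [hff, List.append_assoc]
      exact hch

lemma alt_getD {t : List (Bool × ℕ)} (h : Alternating t) :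
    ∀ k i, i + k < t.length →
      (t.getD (i + k) (true, 0)).1 =
        if k % 2 = 0 then (t.getD i (true, 0)).1 else !(t.getD i (true, 0)).1 := by
  unfold Alternating at h
  have hstep : ∀ i, i + 1 < t.length →
      (t.getD (i + 1) (true, 0)).1 = !(t.getD i (true, 0)).1 := by
    intro i hi
    have h' := List.isChain_iff_getElem.1 h i (by omega)
    rw [List.getD_eq_getElem _ _ hi, List.getD_eq_getElem _ _ (by omega : i < t.length)]
    have h'' : t[i].1 ≠ t[i + 1].1 := by simpa [List.get_eq_getElem] using h'
    exact Bool.eq_not_of_ne h''.symm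
  intro k
  induction k with
  | zero => intro i _; simp
  | succ k ih =>
    intro i hik
    have e1 : i + (k + 1) = (i + k) + 1 := by omega
    rw [e1, hstep (i + k) (by omega), ih i (by omega)]
    by_cases hk : k % 2 = 0
    · have h2 : (k + 1) % 2 = 1 := by omega
      simp [hk, h2]
    · have h2 : (k + 1) % 2 = 0 := by omega
      simp [hk, h2]

lemma alternating_splice {t : List (Bool × ℕ)} (h : Alternating t) {p q : ℕ}
    (hpq : p ≤ q) (hq : q ≤ t.length) (hpar : (q - p) % 2 = 0) :
    Alternating (t.take p ++ t.drop q) := by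
  unfold Alternating at h ⊢
  apply List.IsChain.append (h.take p) (h.drop q)
  intro z hz y hy
  rcases Nat.eq_zero_or_pos p with rfl | hp
  · simp at hz
  rcases Nat.lt_or_ge q t.length with hql | hql
  · have hplen : p ≤ t.length := le_trans hpq hq
    have hz' : z = t[p - 1]'(by omega) := by
      rw [List.getLast?_eq_getElem?] at hz
      have hlt : (t.take p).length = p := by simp [hplen]
      rw [hlt] at hz
      have h5 : (t.take p)[p - 1]? = t[p - 1]? := List.getElem?_take_of_lt (by omega)
      rw [h5, List.getElem?_eq_getElem (by omega)] at hz
      simpa using hz.symm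
    have hy' : y = t[q]'(hql) := by
      have h6 : (t.drop q).head? = t[q]? := by
        rw [List.head?_eq_getElem?, List.getElem?_drop]
        simp
      rw [h6, List.getElem?_eq_getElem hql] at hy
      simpa using hy.symm
    subst hz' hy'
    have halt := alt_getD h (q - (p - 1)) (p - 1) (by omega)
    rw [if_neg (by omega)] at halt
    have he : p - 1 + (q - (p - 1)) = q := by omega
    rw [he] at halt
    rw [List.getD_eq_getElem _ _ hql, List.getD_eq_getElem _ _ (by omega : p - 1 < t.length)]
      at halt
    rw [halt]
    simp
  · have h7 : t.drop q = [] := List.drop_eq_nil_of_le hql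
    rw [h7] at hy
    simp at hy

lemma pump (M : GFA T) (hS : M.Simple) (hE : M.EpsFree) {w : List T}
    (hw : w ∈ M.langInitEven) (hlen : 2 * Nat.card M.Q + 1 < w.length) :
    ∃ w' ∈ M.langInitEven, w.length - 2 * Nat.card M.Q ≤ w'.length ∧ w'.length < w.length := by
  classical
  obtain ⟨x, y, ls, fin, hxyw, hfin, ⟨l₀, t, rfl, ht⟩, hch⟩ := hw
  haveI := M.finQ
  haveI : Fintype M.Q := Fintype.ofFinite _
  set N := Nat.card M.Q with hN
  have hwlen : w.length = x.length + y.length := by rw [hxyw]; simp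
  have hlslen : x.length + y.length = t.length + 1 := by
    have h9 := chain_len hS hE hch
    dsimp only at h9
    simp only [List.length_cons, List.length_nil] at h9
    omega
  obtain ⟨g, hg0, hgl, hgs⟩ := chain_decompose hch
  have hcard : Fintype.card M.Q < Fintype.card (Fin (N + 1)) := by
    rw [Fintype.card_fin, hN, Nat.card_eq_fintype_card]
    omega
  obtain ⟨r1, r2, hne, heq⟩ :=
    Fintype.exists_ne_map_eq_of_card_lt (fun r : Fin (N + 1) => (g (2 * r.1 + 1)).2.1) hcard
  have key : ∃ i j, i < j ∧ i % 2 = 1 ∧ j % 2 = 1 ∧ j ≤ 2 * N + 1 ∧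
      (g i).2.1 = (g j).2.1 := by
    have hr12 : r1.1 ≠ r2.1 := fun hc => hne (Fin.ext hc)
    rcases Nat.lt_or_ge r1.1 r2.1 with hlt | hge
    · exact ⟨2 * r1.1 + 1, 2 * r2.1 + 1, by omega, by omega, by omega,
        by have := r2.isLt; omega, heq⟩
    · exact ⟨2 * r2.1 + 1, 2 * r1.1 + 1, by omega, by omega, by omega,
        by have := r1.isLt; omega, heq.symm⟩
  obtain ⟨i, j, hij, hi2, hj2, hjle, hqq⟩ := key
  have hjlen : j ≤ (l₀ :: t).length := by
    simp only [List.length_cons]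
    omega
  have C0i : M.Chain (x, M.start, y) ((l₀ :: t).take i) (g i) := by
    have h9 := chain_recompose g (l₀ :: t) hgs (Nat.zero_le i) (by omega)
    rw [hg0] at h9
    simpa using h9
  have Cij : M.Chain (g i) (((l₀ :: t).drop i).take (j - i)) (g j) :=
    chain_recompose g (l₀ :: t) hgs (le_of_lt hij) hjlen
  have Cjn : M.Chain (g j) ((l₀ :: t).drop j) ([], fin, []) := by
    have h9 := chain_recompose g (l₀ :: t) hgs hjlen (le_refl _)
    rw [hgl] at h9
    have h10 : ((l₀ :: t).drop j).take ((l₀ :: t).length - j) = (l₀ :: t).drop j := by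
      rw [← List.length_drop]
      exact List.take_length
    rwa [h10] at h9
  have s1 := chain_shrink C0i
  obtain ⟨E, hE1⟩ := s1.1
  obtain ⟨F, hF1⟩ := s1.2
  have s2 := chain_shrink Cij
  have C0i' : M.Chain ((g i).1 ++ E, M.start, F ++ (g i).2.2) ((l₀ :: t).take i)
      ((g i).1, (g i).2.1, (g i).2.2) := by
    rw [hE1, hF1]
    exact C0i
  have Ctr := chain_translate ((l₀ :: t).take i) C0i' (g j).1 (g j).2.2
  rw [hqq] at Ctr
  have Cfull : M.Chain ((g j).1 ++ E, M.start, F ++ (g j).2.2)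
      ((l₀ :: t).take i ++ (l₀ :: t).drop j) ([], fin, []) :=
    chain_append Ctr Cjn
  have L1 := chain_len hS hE C0i
  have L2 := chain_len hS hE Cij
  have ht1 : ((l₀ :: t).take i).length = i := by
    rw [List.length_take]
    simp only [List.length_cons]
    omega
  have ht2 : (((l₀ :: t).drop i).take (j - i)).length = j - i := by
    rw [List.length_take, List.length_drop]
    simp only [List.length_cons]
    omega
  rw [ht1] at L1
  rw [ht2] at L2
  simp only at L1 L2
  have LE := congrArg List.length hE1
  have LF := congrArg List.length hF1
  simp only [List.length_append] at LE LF
  obtain ⟨i', rfl⟩ : ∃ i', i = i' + 1 := ⟨i - 1, by omega⟩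
  obtain ⟨j', rfl⟩ : ∃ j', j = j' + 1 := ⟨j - 1, by omega⟩
  have hi'j' : i' ≤ j' := by omega
  have hj't : j' ≤ t.length := by
    simp only [List.length_cons] at hjlen
    omega
  have hall : ∀ l ∈ l₀ :: t, l.2 = 1 := chain_labels hS hE hch
  set s : List (Bool × ℕ) := t.take i' ++ t.drop j' with hsdef
  have hslen : s.length = i' + (t.length - j') := by
    rw [hsdef, List.length_append, List.length_take, List.length_drop]
    omega
  have hsmem : ∀ z ∈ s, z ∈ l₀ :: t := by
    intro z hz
    rcases List.mem_append.1 hz with hz | hz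
    · exact List.mem_cons_of_mem _ (List.mem_of_mem_take hz)
    · exact List.mem_cons_of_mem _ (List.mem_of_mem_drop hz)
  have hEven : EvenTrace s := by
    refine ⟨?_, ?_, ?_⟩
    · rw [hslen]
      have := ht.1
      omega
    · exact alternating_splice ht.2.1 hi'j' hj't (by omega)
    · intro i2 h2
      have hm1 : s.getD (2 * i2) (true, 0) ∈ s := by
        rw [List.getD_eq_getElem _ _ (by omega)]
        exact List.getElem_mem _
      have hm2 : s.getD (2 * i2 + 1) (true, 0) ∈ s := by
        rw [List.getD_eq_getElem _ _ h2]
        exact List.getElem_mem _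
      rw [hall _ (hsmem _ hm1), hall _ (hsmem _ hm2)]
  have htrace : (l₀ :: t).take (i' + 1) ++ (l₀ :: t).drop (j' + 1) = l₀ :: s := by
    rw [List.take_succ_cons, List.drop_succ_cons]
    rfl
  rw [htrace] at Cfull
  refine ⟨((g (j' + 1)).1 ++ E) ++ (F ++ (g (j' + 1)).2.2),
    ⟨(g (j' + 1)).1 ++ E, F ++ (g (j' + 1)).2.2, l₀ :: s, fin, rfl, hfin,
      ⟨l₀, s, rfl, hEven⟩, Cfull⟩, ?_, ?_⟩
  · simp only [List.length_append]
    omega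
  · simp only [List.length_append]
    omega

end Aux

theorem epsfree_initeven_family_ssubset_oddLength (T : Type) [Nonempty T] :
    {L : Set (List T) | ∃ M : GFA T, M.Simple ∧ M.EpsFree ∧ M.langInitEven = L} ⊂
      {L : Set (List T) | ∀ w ∈ L, Odd w.length} := by
  rw [Set.ssubset_def]
  constructor
  · rintro L ⟨M, hS, hE, rfl⟩ w hw
    obtain ⟨x, y, ls, f, hxyw, hf, ⟨l₀, t, rfl, ht⟩, hch⟩ := hw
    have hl := chain_len hS hE hch
    simp only [List.length_cons, List.length_nil] at hl
    rw [hxyw, Nat.odd_iff]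
    simp only [List.length_append]
    have := ht.1
    omega
  · intro hcon
    have a : T := Classical.arbitrary T
    have hmem : {w : List T | ∃ k, w = List.replicate (3 ^ k) a} ∈
        {L : Set (List T) | ∀ w ∈ L, Odd w.length} := by
      rintro w ⟨k, rfl⟩
      rw [List.length_replicate]
      exact Odd.pow ⟨1, by norm_num⟩
    obtain ⟨M, hS, hE, hLM⟩ := hcon hmem
    haveI := M.finQ
    set N := Nat.card M.Q with hN
    have hN1 : 1 ≤ N := Nat.one_le_iff_ne_zero.2 (Nat.card_ne_zero.2 ⟨⟨M.start⟩, M.finQ⟩)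
    have hNp : N < 3 ^ N := Nat.lt_pow_self (by norm_num)
    have hw : List.replicate (3 ^ (N + 1)) a ∈ M.langInitEven := by
      rw [hLM]
      exact ⟨N + 1, rfl⟩
    have h1 : 2 * N + 1 < (List.replicate (3 ^ (N + 1)) a).length := by
      rw [List.length_replicate, pow_succ]
      omega
    obtain ⟨w', hw', hge, hlt⟩ := pump M hS hE hw h1
    rw [hLM] at hw'
    obtain ⟨k', hk'⟩ := hw'
    rw [hk', List.length_replicate] at hge hlt
    rw [List.length_replicate] at hge hlt
    have hk'le : k' ≤ N := by
      by_contra hc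
      push_neg at hc
      have : 3 ^ (N + 1) ≤ 3 ^ k' := Nat.pow_le_pow_right (by norm_num) hc
      omega
    have h3 : 3 ^ k' ≤ 3 ^ N := Nat.pow_le_pow_right (by norm_num) hk'le
    rw [pow_succ] at hge hlt
    omega

end IETW
end

section
/- Let M = (Q, Σ, R, s, F) be an ε-free IETWSFA and let A, B ⊆ Σ* be regular. Then the language {uv | usv ⇒* f in M, f ∈ F, u ∈ A, v ∈ B} is accepted by some ε-free IETWSFA, and hence is linear. -/
namespace IETW

variable {T : Type}

/-- The language `{uv | usv ⇒* f in M, f ∈ F, u ∈ A, v ∈ B}`. -/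
def leftRightLang {T : Type} (M : GFA T) (A B : Set (List T)) : Set (List T) :=
  {w | ∃ u v f ls, w = u ++ v ∧ u ∈ A ∧ v ∈ B ∧ f ∈ M.accept ∧
    M.Chain (u, M.start, v) ls ([], f, [])}

section Auxiliary

variable {T : Type} {σA σB : Type} [Fintype σA] [Fintype σB]

/-- The "backward" subset state for the left DFA: the set of states from which reading `s`
lands in an accepting state. -/
def SAOf (DA : DFA T σA) (s : List T) : Set σA := {qa | DA.evalFrom qa s ∈ DA.accept}

set_option linter.unusedSectionVars false in
lemma SAOf_append (DA : DFA T σA) (x s : List T) :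
    SAOf DA (x ++ s) = {qa | DA.evalFrom qa x ∈ SAOf DA s} := by
  ext qa; simp [SAOf, DFA.evalFrom_of_append]

/-- Product of a GFA with two DFAs: the first DFA checks (backwards) the word erased on the
left, the second checks the word erased on the right. -/
def prodGFA (M : GFA T) (DA : DFA T σA) (DB : DFA T σB) : GFA T where
  Q := M.Q × Set σA × σB
  finQ := by have := M.finQ; infer_instance
  start := (M.start, SAOf DA [], DB.start)
  accept := {f | f.1 ∈ M.accept ∧ DA.start ∈ f.2.1 ∧ f.2.2 ∈ DB.accept}
  ruleL := (fun r : (List T × M.Q × M.Q) × (Set σA × σB) =>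
      (r.1.1, (r.1.2.1, r.2.1, r.2.2),
        (r.1.2.2, {qa | DA.evalFrom qa r.1.1 ∈ r.2.1}, r.2.2))) '' (M.ruleL ×ˢ Set.univ)
  ruleR := (fun r : (M.Q × List T × M.Q) × (Set σA × σB) =>
      ((r.1.1, r.2.1, r.2.2), r.1.2.1,
        (r.1.2.2, r.2.1, DB.evalFrom r.2.2 r.1.2.1))) '' (M.ruleR ×ˢ Set.univ)
  finL := (M.finL.prod Set.finite_univ).image _
  finR := (M.finR.prod Set.finite_univ).image _

lemma chain_lift {M : GFA T} {DA : DFA T σA} {DB : DFA T σB}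
    {c c' : List T × M.Q × List T} {ls} (h : M.Chain c ls c') :
    ∀ s t : List T, ∃ s2 t2, c.1 ++ s = c'.1 ++ s2 ∧ t ++ c.2.2 = t2 ++ c'.2.2 ∧
      (prodGFA M DA DB).Chain (c.1, (c.2.1, SAOf DA s, DB.eval t), c.2.2) ls
        (c'.1, (c'.2.1, SAOf DA s2, DB.eval t2), c'.2.2) := by
  induction h with
  | nil c => exact fun s t => ⟨s, t, rfl, rfl, GFA.Chain.nil _⟩
  | cons h h' ih =>
    intro s t
    cases h with
    | @left u v x q p hr =>
      obtain ⟨s2, t2, e1, e2, hc⟩ := ih (x ++ s) t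
      refine ⟨s2, t2, by simpa [List.append_assoc] using e1, e2, ?_⟩
      refine GFA.Chain.cons ?_ hc
      have hmem : (x, ((q, SAOf DA s, DB.eval t) : (prodGFA M DA DB).Q),
          (p, SAOf DA (x ++ s), DB.eval t)) ∈ (prodGFA M DA DB).ruleL := by
        refine ⟨((x, q, p), (SAOf DA s, DB.eval t)), ⟨hr, trivial⟩, ?_⟩
        simp [SAOf_append]
      exact GFA.Step.left hmem
    | @right u v x q p hr =>
      obtain ⟨s2, t2, e1, e2, hc⟩ := ih s (t ++ x)
      refine ⟨s2, t2, e1, by simpa [List.append_assoc] using e2, ?_⟩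
      have hmem : (((q, SAOf DA s, DB.eval t) : (prodGFA M DA DB).Q), x,
          (p, SAOf DA s, DB.evalFrom (DB.eval t) x)) ∈ (prodGFA M DA DB).ruleR :=
        ⟨((q, x, p), (SAOf DA s, DB.eval t)), ⟨hr, trivial⟩, rfl⟩
      have heval : DB.eval (t ++ x) = DB.evalFrom (DB.eval t) x := by
        simp [DFA.eval, DFA.evalFrom_of_append]
      rw [heval] at hc
      exact GFA.Chain.cons (GFA.Step.right hmem) hc

lemma chain_proj {M : GFA T} {DA : DFA T σA} {DB : DFA T σB}
    {c c' : List T × (prodGFA M DA DB).Q × List T} {ls}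
    (h : (prodGFA M DA DB).Chain c ls c') :
    M.Chain (c.1, c.2.1.1, c.2.2) ls (c'.1, c'.2.1.1, c'.2.2) ∧
      ∃ d e, c.1 = c'.1 ++ d ∧ c.2.2 = e ++ c'.2.2 ∧
        c'.2.1.2.1 = {qa | DA.evalFrom qa d ∈ c.2.1.2.1} ∧
        c'.2.1.2.2 = DB.evalFrom c.2.1.2.2 e := by
  induction h with
  | nil c =>
    exact ⟨GFA.Chain.nil _, [], [], by simp, by simp, by ext qa; simp [DFA.evalFrom], by simp⟩
  | cons h h' ih =>
    cases h with
    | @left u v x q p hr =>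
      obtain ⟨⟨⟨x0, q0, p0⟩, SA0, qb0⟩, hmem, heq⟩ := hr
      replace heq := (Prod.mk_inj.mp heq).imp_right Prod.mk_inj.mp
      obtain ⟨rfl, hQq, hQp⟩ := heq
      obtain ⟨rfl, rfl⟩ : q = _ ∧ p = _ := ⟨hQq.symm, hQp.symm⟩
      obtain ⟨ihc, d, e, hd, he, hSA, hqb⟩ := ih
      dsimp only at ihc hd he hSA hqb ⊢
      refine ⟨GFA.Chain.cons (GFA.Step.left hmem.1) ihc, d ++ x0, e,
        by rw [hd, List.append_assoc], he, ?_, hqb⟩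
      rw [hSA]; ext qa; simp [DFA.evalFrom_of_append]
    | @right u v x q p hr =>
      obtain ⟨⟨⟨q0, x0, p0⟩, SA0, qb0⟩, hmem, heq⟩ := hr
      replace heq := (Prod.mk_inj.mp heq).imp_right Prod.mk_inj.mp
      obtain ⟨hQq, rfl, hQp⟩ := heq
      obtain ⟨rfl, rfl⟩ : q = _ ∧ p = _ := ⟨hQq.symm, hQp.symm⟩
      obtain ⟨ihc, d, e, hd, he, hSA, hqb⟩ := ih
      dsimp only at ihc hd he hSA hqb ⊢
      refine ⟨GFA.Chain.cons (GFA.Step.right hmem.1) ihc, d, x0 ++ e,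
        hd, by rw [he, List.append_assoc], hSA, ?_⟩
      rw [hqb]; simp [DFA.evalFrom_of_append]

lemma prodGFA_lang {M : GFA T} {DA : DFA T σA} {DB : DFA T σB}
    {A B : Set (List T)} (hDA : DA.accepts = (A : Language T))
    (hDB : DB.accepts = (B : Language T)) :
    (prodGFA M DA DB).lang = leftRightLang M A B := by
  ext w
  constructor
  · rintro ⟨x, y, ls, ⟨f, SA', qb'⟩, rfl, ⟨hf, hstart, hqb⟩, hch⟩
    obtain ⟨hproj, d, e, hd, he, hSA, hqbe⟩ := chain_proj hch
    simp only [List.nil_append, List.append_nil] at hd he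
    subst hd he
    refine ⟨x, y, f, ls, rfl, ?_, ?_, hf, hproj⟩
    · have : x ∈ DA.accepts := by
        rw [hSA] at hstart
        simpa [DFA.mem_accepts, DFA.eval, SAOf, prodGFA] using hstart
      rwa [hDA] at this
    · have : y ∈ DB.accepts := by
        rw [hqbe] at hqb
        simpa [DFA.mem_accepts, DFA.eval, prodGFA] using hqb
      rwa [hDB] at this
  · rintro ⟨u, v, f, ls, rfl, hu, hv, hf, hch⟩
    obtain ⟨s2, t2, e1, e2, hc⟩ := chain_lift (DA := DA) (DB := DB) hch [] []
    simp only [List.append_nil, List.nil_append] at e1 e2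
    subst e1 e2
    refine ⟨u, v, ls, (f, SAOf DA u, DB.eval v), rfl, ⟨hf, ?_, ?_⟩, ?_⟩
    · have : u ∈ DA.accepts := by rw [hDA]; exact hu
      simpa [SAOf, DFA.mem_accepts, DFA.eval] using this
    · have : v ∈ DB.accepts := by rw [hDB]; exact hv
      simpa [DFA.mem_accepts] using this
    · have hstart : (prodGFA M DA DB).start = (M.start, SAOf DA [], DB.eval []) := rfl
      rw [hstart]
      exact hc

/-- The linear grammar simulating (backwards) the computations of a GFA. -/
def gfaLG (M' : GFA T) : LG T where
  N := Option M'.Q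
  finN := by have := M'.finQ; have := Fintype.ofFinite M'.Q; infer_instance
  start := none
  rules :=
    ((fun f => ((none : Option M'.Q), ([] : List T), some (some f, ([] : List T)))) '' M'.accept)
    ∪ ((fun r : List T × M'.Q × M'.Q =>
        (some r.2.2, r.1, some (some r.2.1, ([] : List T)))) '' M'.ruleL)
    ∪ ((fun r : M'.Q × List T × M'.Q =>
        (some r.2.2, ([] : List T), some (some r.1, r.2.1))) '' M'.ruleR)
    ∪ {(some M'.start, [], none)}
  finR := by
    have := M'.finQ
    exact (((M'.accept.toFinite.image _).union (M'.finL.image _)).union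
      (M'.finR.image _)).union (Set.finite_singleton _)

lemma gfaLG_reach (M' : GFA T) {c : List T × (gfaLG M').N × List T}
    (h : Relation.ReflTransGen (gfaLG M').Der ([], none, []) c) :
    (c.2.1 = none → c.1 = [] ∧ c.2.2 = []) ∧
    (∀ q : M'.Q, c.2.1 = some q →
      ∃ f ls, f ∈ M'.accept ∧ M'.Chain (c.1, q, c.2.2) ls ([], f, [])) := by
  induction h with
  | refl => exact ⟨fun _ => ⟨rfl, rfl⟩, fun q hq => by cases hq⟩
  | tail hs hstep ih =>
    cases hstep with
    | @step u v x y A B hr =>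
      rcases hr with ((⟨f0, hf0, heq⟩ | ⟨⟨x0, q0, p0⟩, hmem, heq⟩) |
          ⟨⟨q0, x0, p0⟩, hmem, heq⟩) | heq
      · replace heq := (Prod.mk_inj.mp heq).imp_right fun h =>
          (Prod.mk_inj.mp h).imp_right fun h => Prod.mk_inj.mp (Option.some.inj h)
        obtain ⟨hA, hx, hB, hy⟩ := heq
        subst hx hy
        obtain ⟨hu, hv⟩ := ih.1 hA.symm
        subst hu hv
        refine ⟨fun h => absurd (hB.trans h) (by simp), fun q hq => ?_⟩
        rw [← hB] at hq
        obtain rfl : f0 = q := by cases hq; rfl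
        exact ⟨f0, [], hf0, by simpa using GFA.Chain.nil _⟩
      · replace heq := (Prod.mk_inj.mp heq).imp_right fun h =>
          (Prod.mk_inj.mp h).imp_right fun h => Prod.mk_inj.mp (Option.some.inj h)
        obtain ⟨hA, hx, hB, hy⟩ := heq
        subst hx hy
        obtain ⟨f, ls, hf, hch⟩ := ih.2 p0 hA.symm
        refine ⟨fun h => absurd (hB.trans h) (by simp), fun q hq => ?_⟩
        rw [← hB] at hq
        obtain rfl : q0 = q := by cases hq; rfl
        exact ⟨f, _, hf, GFA.Chain.cons (GFA.Step.left hmem) hch⟩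
      · replace heq := (Prod.mk_inj.mp heq).imp_right fun h =>
          (Prod.mk_inj.mp h).imp_right fun h => Prod.mk_inj.mp (Option.some.inj h)
        obtain ⟨hA, hx, hB, hy⟩ := heq
        subst hx hy
        obtain ⟨f, ls, hf, hch⟩ := ih.2 p0 hA.symm
        refine ⟨fun h => absurd (hB.trans h) (by simp), fun q hq => ?_⟩
        rw [← hB] at hq
        obtain rfl : q0 = q := by cases hq; rfl
        have hch2 : M'.Chain (u ++ [], q0, x0 ++ v) ((false, x0.length) :: ls) ([], f, []) := by
          simpa using GFA.Chain.cons (GFA.Step.right hmem) hch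
        exact ⟨f, _, hf, hch2⟩
      · replace heq := (Prod.mk_inj.mp (Set.mem_singleton_iff.mp heq)).imp_right Prod.mk_inj.mp
        exact absurd heq.2.2 (by simp)

lemma gfaLG_sim (M' : GFA T) {c c'' : List T × M'.Q × List T} {ls} (h : M'.Chain c ls c'') :
    Relation.ReflTransGen (gfaLG M').Der (c''.1, some c''.2.1, c''.2.2)
      (c.1, some c.2.1, c.2.2) := by
  induction h with
  | nil c => exact Relation.ReflTransGen.refl
  | cons h h' ih =>
    refine ih.tail ?_
    cases h with
    | @left u v x q p hr =>
      exact LG.Der.step (show _ ∈ (gfaLG M').rules from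
        Or.inl (Or.inl (Or.inr ⟨(x, q, p), hr, rfl⟩)))
    | @right u v x q p hr =>
      have : LG.Der (gfaLG M') (u, some p, v) (u ++ [], some q, x ++ v) :=
        LG.Der.step (show _ ∈ (gfaLG M').rules from Or.inl (Or.inr ⟨(q, x, p), hr, rfl⟩))
      simpa using this

lemma gfaLG_lang (M' : GFA T) : (gfaLG M').lang = M'.lang := by
  ext w
  constructor
  · rintro ⟨u, A, v, x, hreach, hterm, rfl⟩
    rcases hterm with ((⟨f0, _, heq⟩ | ⟨r0, _, heq⟩) | ⟨r0, _, heq⟩) | heq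
    · exact absurd (congrArg (fun z => z.2.2) heq) (by simp)
    · exact absurd (congrArg (fun z => z.2.2) heq) (by simp)
    · exact absurd (congrArg (fun z => z.2.2) heq) (by simp)
    · replace heq := (Prod.mk_inj.mp (Set.mem_singleton_iff.mp heq)).imp_right Prod.mk_inj.mp
      obtain ⟨hA, hx, -⟩ := heq
      subst hA hx
      obtain ⟨f, ls, hf, hch⟩ := (gfaLG_reach M' hreach).2 M'.start rfl
      exact ⟨u, v, ls, f, by simp, hf, hch⟩
  · rintro ⟨x, y, ls, f, rfl, hf, hch⟩
    have h1 : LG.Der (gfaLG M') ([], none, []) ([] ++ [], some f, [] ++ []) :=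
      LG.Der.step (Or.inl (Or.inl (Or.inl ⟨f, hf, rfl⟩)))
    have h2 := gfaLG_sim M' hch
    exact ⟨x, some M'.start, y, [],
      (Relation.ReflTransGen.single h1).trans h2, Or.inr rfl, by simp⟩

end Auxiliary

theorem input_AB_regular_linear {T : Type} (M : GFA T) (hS : M.Simple) (hE : M.EpsFree)
    (A B : Set (List T)) (hA : Language.IsRegular (A : Language T))
    (hB : Language.IsRegular (B : Language T)) :
    (∃ M' : GFA T, M'.Simple ∧ M'.EpsFree ∧ M'.lang = leftRightLang M A B) ∧
      (∃ G : LG T, G.lang = leftRightLang M A B) := by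
  obtain ⟨σA, _, DA, hDA⟩ := hA
  obtain ⟨σB, _, DB, hDB⟩ := hB
  have hlang : (prodGFA M DA DB).lang = leftRightLang M A B := prodGFA_lang hDA hDB
  refine ⟨⟨prodGFA M DA DB, ⟨?_, ?_⟩, ⟨?_, ?_⟩, hlang⟩,
    ⟨gfaLG (prodGFA M DA DB), by rw [gfaLG_lang, hlang]⟩⟩
  · rintro r ⟨⟨⟨x, q, p⟩, SA, qb⟩, ⟨hmem, -⟩, rfl⟩
    exact hS.1 _ hmem
  · rintro r ⟨⟨⟨q, x, p⟩, SA, qb⟩, ⟨hmem, -⟩, rfl⟩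
    exact hS.2 _ hmem
  · rintro r ⟨⟨⟨x, q, p⟩, SA, qb⟩, ⟨hmem, -⟩, rfl⟩
    exact hE.1 _ hmem
  · rintro r ⟨⟨⟨q, x, p⟩, SA, qb⟩, ⟨hmem, -⟩, rfl⟩
    exact hE.2 _ hmem

end IETW
end

section
/- Let M = (Q, Σ, R, s, F) be an ε-free IETWSFA, A ⊆ Σ* be finite, and B ⊆ Σ* be regular. Then the language {uv | usv ⇒* f in M, f ∈ F, u ∈ A, v ∈ B} is regular (accepted by an ordinary finite automaton). -/
namespace IETW

variable {T : Type}

/-! ### Auxiliary material for the proof -/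

section Aux

open Set

/-- Concatenation of computations. -/
lemma chain_append_s17 {M : GFA T} {c c' c'' : List T × M.Q × List T}
    {ls ls' : List (Bool × ℕ)} (h : M.Chain c ls c') (h' : M.Chain c' ls' c'') :
    M.Chain c (ls ++ ls') c'' := by
  induction h with
  | nil => simpa using h'
  | cons hs _ ih => exact GFA.Chain.cons hs (ih h')

/-- The empty language is regular. -/
lemma isRegular_empty : Language.IsRegular (∅ : Set (List T)) :=
  ⟨Unit, inferInstance, ⟨fun _ _ => (), (), ∅⟩, by
    ext w; simp only [DFA.mem_accepts]; exact iff_of_false (Set.notMem_empty _) (Set.notMem_empty _)⟩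

/-- Product DFA with a custom acceptance condition. -/
private def prodDFA {σ₁ σ₂ : Type} (D₁ : DFA T σ₁) (D₂ : DFA T σ₂)
    (acc : Set (σ₁ × σ₂)) : DFA T (σ₁ × σ₂) :=
  ⟨fun s a => (D₁.step s.1 a, D₂.step s.2 a), (D₁.start, D₂.start), acc⟩

private lemma prodDFA_evalFrom {σ₁ σ₂ : Type} (D₁ : DFA T σ₁) (D₂ : DFA T σ₂)
    (acc : Set (σ₁ × σ₂)) (s : σ₁ × σ₂) (w : List T) :
    (prodDFA D₁ D₂ acc).evalFrom s w = (D₁.evalFrom s.1 w, D₂.evalFrom s.2 w) := by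
  induction w generalizing s with
  | nil => rfl
  | cons a w ih => exact ih ((D₁.step s.1 a, D₂.step s.2 a))

lemma isRegular_union {L₁ L₂ : Set (List T)} (h₁ : Language.IsRegular L₁)
    (h₂ : Language.IsRegular L₂) : Language.IsRegular (L₁ ∪ L₂ : Set (List T)) := by
  obtain ⟨σ₁, i₁, D₁, rfl⟩ := h₁
  obtain ⟨σ₂, i₂, D₂, rfl⟩ := h₂
  refine ⟨σ₁ × σ₂, inferInstance,
    prodDFA D₁ D₂ {p | p.1 ∈ D₁.accept ∨ p.2 ∈ D₂.accept}, ?_⟩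
  ext w
  rw [DFA.mem_accepts, DFA.eval, prodDFA_evalFrom]
  exact Iff.rfl

lemma isRegular_inter {L₁ L₂ : Set (List T)} (h₁ : Language.IsRegular L₁)
    (h₂ : Language.IsRegular L₂) : Language.IsRegular (L₁ ∩ L₂ : Set (List T)) := by
  obtain ⟨σ₁, i₁, D₁, rfl⟩ := h₁
  obtain ⟨σ₂, i₂, D₂, rfl⟩ := h₂
  refine ⟨σ₁ × σ₂, inferInstance,
    prodDFA D₁ D₂ {p | p.1 ∈ D₁.accept ∧ p.2 ∈ D₂.accept}, ?_⟩
  ext w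
  rw [DFA.mem_accepts, DFA.eval, prodDFA_evalFrom]
  exact Iff.rfl

open Classical in
/-- A DFA accepting `{a} * L`, given a DFA for `L`. -/
private noncomputable def consDFA {σ : Type} (a : T) (D : DFA T σ) :
    DFA T (Option (Option σ)) where
  step s b :=
    match s with
    | none => if b = a then some (some D.start) else some none
    | some none => some none
    | some (some s) => some (some (D.step s b))
  start := none
  accept := {s | ∃ t ∈ D.accept, s = some (some t)}

private lemma consDFA_evalFrom_some {σ : Type} (a : T) (D : DFA T σ) (s : σ)
    (w : List T) :
    (consDFA a D).evalFrom (some (some s)) w = some (some (D.evalFrom s w)) := by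
  induction w generalizing s with
  | nil => rfl
  | cons b w ih => exact ih (D.step s b)

private lemma consDFA_evalFrom_dead {σ : Type} (a : T) (D : DFA T σ) (w : List T) :
    (consDFA a D).evalFrom (some none) w = some none := by
  induction w with
  | nil => rfl
  | cons b w ih => exact ih

lemma isRegular_cons {L : Set (List T)} (a : T) (h : Language.IsRegular L) :
    Language.IsRegular {w : List T | ∃ v, w = a :: v ∧ v ∈ L} := by
  classical
  obtain ⟨σ, i, D, rfl⟩ := h
  refine ⟨Option (Option σ), inferInstance, consDFA a D, ?_⟩
  ext w
  cases w with
  | nil =>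
    simp only [DFA.mem_accepts, DFA.eval, DFA.evalFrom_nil]
    constructor
    · rintro ⟨t, _, h⟩; exact absurd h (by simp [consDFA])
    · rintro ⟨v, h, _⟩; exact absurd h (by simp)
  | cons b v =>
    rw [DFA.mem_accepts]
    have hstep : (consDFA a D).eval (b :: v)
        = (consDFA a D).evalFrom ((consDFA a D).step none b) v := rfl
    by_cases hb : b = a
    · subst hb
      rw [hstep]
      have hd : (consDFA b D).step none b = some (some D.start) := by
        simp [consDFA]
      rw [hd, consDFA_evalFrom_some]
      constructor
      · rintro ⟨t, ht, hteq⟩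
        refine ⟨v, rfl, ?_⟩
        have heq : D.evalFrom D.start v = t := by
          simpa using hteq
        show v ∈ D.accepts
        rw [DFA.mem_accepts, DFA.eval, heq]
        exact ht
      · rintro ⟨v', hv', hmem⟩
        injection hv' with h1 h2
        subst h2
        change D.eval v ∈ D.accept at hmem
        exact ⟨D.evalFrom D.start v, hmem, rfl⟩
    · rw [hstep]
      have hd : (consDFA a D).step none b = some none := by
        simp [consDFA, hb]
      rw [hd, consDFA_evalFrom_dead]
      constructor
      · rintro ⟨t, _, h⟩; simp at h
      · rintro ⟨v', hv', _⟩
        injection hv' with h1 h2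
        exact absurd h1 hb

lemma isRegular_append (u : List T) {L : Set (List T)} (h : Language.IsRegular L) :
    Language.IsRegular {w : List T | ∃ v, w = u ++ v ∧ v ∈ L} := by
  induction u with
  | nil =>
    suffices e : ({w : List T | ∃ v, w = [] ++ v ∧ v ∈ L} : Set (List T)) = L by rw [e]; exact h
    ext w; simp
  | cons a u ih =>
    have h2 := isRegular_cons a ih
    suffices e : ({w : List T | ∃ v, w = a :: u ++ v ∧ v ∈ L} : Set (List T)) =
        {w | ∃ v, w = a :: v ∧ v ∈ {w : List T | ∃ v, w = u ++ v ∧ v ∈ L}} by rw [e]; exact h2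
    ext w
    constructor
    · rintro ⟨v, rfl, hv⟩; exact ⟨u ++ v, rfl, v, rfl, hv⟩
    · rintro ⟨v', rfl, v, rfl, hv⟩; exact ⟨v, rfl, hv⟩

lemma isRegular_biUnion {s : Set (List T)} (hs : s.Finite)
    (f : List T → Set (List T)) (hf : ∀ u ∈ s, Language.IsRegular (f u)) :
    Language.IsRegular (⋃ u ∈ s, f u) := by
  refine Set.Finite.induction_on
    (motive := fun s _ => (∀ u ∈ s, Language.IsRegular (f u)) →
      Language.IsRegular (⋃ u ∈ s, f u)) s hs ?_ ?_ hf
  · intro _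
    simpa using (isRegular_empty : Language.IsRegular (∅ : Set (List T)))
  · intro a s _ _ ih hf'
    rw [Set.biUnion_insert]
    exact isRegular_union (hf' a (Set.mem_insert _ _))
      (ih fun u hu => hf' u (Set.mem_insert_of_mem _ hu))

/-! #### εNFA generalities -/

private lemma εClosure_mono' {σ : Type} (N : εNFA T σ) {S S' : Set σ} (h : S ⊆ S') :
    N.εClosure S ⊆ N.εClosure S' := by
  intro t ht
  induction ht with
  | base s hs => exact εNFA.εClosure.base s (h hs)
  | step s t hst _ ih => exact εNFA.εClosure.step s t hst ih

private lemma εClosure_trans' {σ : Type} (N : εNFA T σ) {S : Set σ} {t : σ}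
    (ht : t ∈ N.εClosure S) : N.εClosure {t} ⊆ N.εClosure S := by
  intro r hr
  induction hr with
  | base s hs => rwa [Set.mem_singleton_iff.mp hs]
  | step s r hsr _ ih => exact εNFA.εClosure.step s r hsr ih

private lemma stepSet_mono' {σ : Type} (N : εNFA T σ) {S S' : Set σ} (h : S ⊆ S')
    (a : T) : N.stepSet S a ⊆ N.stepSet S' a := by
  intro t ht
  rw [εNFA.mem_stepSet_iff] at ht ⊢
  obtain ⟨r, hr, hrt⟩ := ht
  exact ⟨r, h hr, hrt⟩

private lemma foldl_stepSet_mono {σ : Type} (N : εNFA T σ) {S S' : Set σ}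
    (h : S ⊆ S') (w : List T) :
    w.foldl N.stepSet S ⊆ w.foldl N.stepSet S' := by
  induction w generalizing S S' with
  | nil => exact h
  | cons a w ih => exact ih (stepSet_mono' N h a)

private lemma evalFrom_of_eps {σ : Type} (N : εNFA T σ) {s t : σ}
    (ht : t ∈ N.step s none) (w : List T) :
    N.evalFrom {t} w ⊆ N.evalFrom {s} w := by
  refine foldl_stepSet_mono N ?_ w
  refine εClosure_trans' N ?_
  exact εNFA.εClosure.step s t ht (εNFA.εClosure.base s rfl)

private lemma evalFrom_of_symb {σ : Type} (N : εNFA T σ) {s t : σ} {a : T}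
    (ht : t ∈ N.step s (some a)) (w : List T) :
    N.evalFrom {t} w ⊆ N.evalFrom {s} (a :: w) := by
  have h1 : N.εClosure {t} ⊆ N.stepSet (N.εClosure {s}) a := by
    intro r hr
    rw [εNFA.mem_stepSet_iff]
    exact ⟨s, εNFA.εClosure.base s rfl,
      εClosure_mono' N (Set.singleton_subset_iff.mpr ht) hr⟩
  exact foldl_stepSet_mono N h1 w

/-- Finiteness of the set of prefixes of a list. -/
private lemma finite_prefixes (u : List T) : Finite {l : List T // l <+: u} := by
  have h : {l : List T | l <+: u}.Finite :=
    u.inits.finite_toSet.subset fun l hl => by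
      simpa [List.mem_inits] using hl
  exact h.to_subtype

private lemma isRegular_of_εNFA {σ : Type} (hσ : Finite σ) (N : εNFA T σ) :
    N.accepts.IsRegular := by
  have : Fintype σ := Fintype.ofFinite σ
  exact ⟨Set σ, Fintype.ofFinite _, N.toNFA.toDFA, by
    rw [NFA.toDFA_correct, εNFA.toNFA_correct]⟩

/-! #### The core construction -/

/-- The language of right inputs accepted starting from `(u, start, ·)`. -/
private def Lset (M : GFA T) (u : List T) : Set (List T) :=
  {v | ∃ ls f, f ∈ M.accept ∧ M.Chain (u, M.start, v) ls ([], f, [])}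

/-- The εNFA simulating `M` on right input `v`, with the left word fixed to `u`:
a state `(l, q)` represents the configuration `(l, q, ·)` where `l` is a prefix
of `u`. Left moves of `M` are ε-moves; right moves consume input symbols. -/
private def coreNFA (M : GFA T) (u : List T) :
    εNFA T ({l : List T // l <+: u} × M.Q) where
  step s b :=
    match b with
    | none => {t | ∃ x, (x, s.2, t.2) ∈ M.ruleL ∧ (s.1 : List T) = (t.1 : List T) ++ x}
    | some a => {t | t.1 = s.1 ∧ (s.2, [a], t.2) ∈ M.ruleR}
  start := {(⟨u, List.prefix_refl u⟩, M.start)}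
  accept := {s | (s.1 : List T) = [] ∧ s.2 ∈ M.accept}

/-- Soundness: a chain of `M` from `(u₁, q, v)` to an accepting configuration
yields acceptance of `v` in the εNFA from the corresponding state. -/
private lemma core_sound {M : GFA T} (hS : M.Simple) (hE : M.EpsFree) {u : List T}
    {f : M.Q} (hf : f ∈ M.accept) :
    ∀ (ls : List (Bool × ℕ)) (u₁ : List T) (q : M.Q) (v : List T)
      (_ : M.Chain (u₁, q, v) ls ([], f, [])) (hu : u₁ <+: u),
      ∃ t ∈ (coreNFA M u).accept, t ∈ (coreNFA M u).evalFrom {(⟨u₁, hu⟩, q)} v := by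
  intro ls
  induction ls with
  | nil =>
    intro u₁ q v h hu
    cases h with
    | nil => exact ⟨(⟨[], hu⟩, f), ⟨rfl, hf⟩, εNFA.εClosure.base _ rfl⟩
  | cons l ls ih =>
    intro u₁ q v h hu
    cases h with
    | cons hstep hrest =>
      cases hstep with
      | @left u' v' x q' p hx =>
        have hu' : u' <+: u := (u'.prefix_append x).trans hu
        obtain ⟨t, htacc, htev⟩ := ih u' p v hrest hu'
        refine ⟨t, htacc, ?_⟩
        refine evalFrom_of_eps (coreNFA M u) ?_ v htev
        exact ⟨x, hx, rfl⟩
      | @right u'' v' x q' p hx =>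
        have hx1 : x.length ≤ 1 := hS.2 _ hx
        have hx0 : x ≠ [] := hE.2 _ hx
        obtain ⟨a, rfl⟩ : ∃ a, x = [a] := by
          cases x with
          | nil => exact absurd rfl hx0
          | cons a xs =>
            cases xs with
            | nil => exact ⟨a, rfl⟩
            | cons b ys => simp at hx1
        obtain ⟨t, htacc, htev⟩ := ih u₁ p v' hrest hu
        refine ⟨t, htacc, ?_⟩
        have hsub := evalFrom_of_symb (coreNFA M u)
          (s := (⟨u₁, hu⟩, q)) (t := (⟨u₁, hu⟩, p)) (a := a) ⟨rfl, hx⟩ v'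
        exact hsub htev

/-- Completeness, ε-part: an εClosure member is reachable by left moves. -/
private lemma core_eps {M : GFA T} {u : List T}
    {S : Set ({l : List T // l <+: u} × M.Q)} {t : {l : List T // l <+: u} × M.Q}
    (ht : t ∈ (coreNFA M u).εClosure S) :
    ∃ s ∈ S, ∀ v : List T,
      ∃ ls, M.Chain ((s.1 : List T), s.2, v) ls ((t.1 : List T), t.2, v) := by
  induction ht with
  | base s hs => exact ⟨s, hs, fun v => ⟨[], GFA.Chain.nil _⟩⟩
  | step s t hst _ ih =>
    obtain ⟨s₀, hs₀, hchain⟩ := ih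
    obtain ⟨x, hx, heq⟩ := hst
    refine ⟨s₀, hs₀, fun v => ?_⟩
    obtain ⟨ls, hc⟩ := hchain v
    refine ⟨ls ++ [(true, x.length)], chain_append_s17 hc ?_⟩
    refine GFA.Chain.cons ?_ (GFA.Chain.nil _)
    rw [heq]
    exact GFA.Step.left hx

/-- Completeness, main part. -/
private lemma core_complete {M : GFA T} {u : List T} :
    ∀ (v : List T) (S : Set ({l : List T // l <+: u} × M.Q))
      (t : {l : List T // l <+: u} × M.Q),
      t ∈ v.foldl (coreNFA M u).stepSet S →
      ∃ s ∈ S, ∃ ls, M.Chain ((s.1 : List T), s.2, v) ls ((t.1 : List T), t.2, []) := by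
  intro v
  induction v with
  | nil =>
    intro S t ht
    exact ⟨t, ht, [], GFA.Chain.nil _⟩
  | cons a v ih =>
    intro S t ht
    obtain ⟨s', hs', ls₂, hc₂⟩ := ih _ t ht
    rw [εNFA.mem_stepSet_iff] at hs'
    obtain ⟨s, hs, hcl⟩ := hs'
    obtain ⟨r, hr, hchain⟩ := core_eps hcl
    obtain ⟨ht1, ht2⟩ := hr
    obtain ⟨ls₁, hc₁⟩ := hchain v
    rw [ht1] at hc₁
    have hstep : M.Step ((s.1 : List T), s.2, [a] ++ v) (false, [a].length)
        ((s.1 : List T), r.2, v) := GFA.Step.right ht2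
    exact ⟨s, hs, (false, [a].length) :: (ls₁ ++ ls₂),
      GFA.Chain.cons hstep (chain_append_s17 hc₁ hc₂)⟩

private lemma coreNFA_accepts {M : GFA T} (hS : M.Simple) (hE : M.EpsFree)
    (u : List T) : (coreNFA M u).accepts = Lset M u := by
  ext v
  constructor
  · rintro ⟨t, htacc, htev⟩
    have htev' : t ∈ v.foldl (coreNFA M u).stepSet
        ((coreNFA M u).εClosure {(⟨u, List.prefix_refl u⟩, M.start)}) := htev
    obtain ⟨s', hs', ls₂, hc₂⟩ := core_complete v _ t htev'
    obtain ⟨s₀, hs₀, hchain⟩ := core_eps hs'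
    rw [Set.mem_singleton_iff] at hs₀
    subst hs₀
    obtain ⟨ls₁, hc₁⟩ := hchain v
    obtain ⟨ht1, ht2⟩ := htacc
    refine ⟨ls₁ ++ ls₂, t.2, ht2, ?_⟩
    have hfin := chain_append_s17 hc₁ hc₂
    rw [ht1] at hfin
    exact hfin
  · rintro ⟨ls, f, hf, hc⟩
    obtain ⟨t, htacc, htev⟩ :=
      core_sound hS hE hf ls u M.start v hc (List.prefix_refl u)
    exact ⟨t, htacc, htev⟩

private lemma isRegular_Lset {M : GFA T} (hS : M.Simple) (hE : M.EpsFree)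
    (u : List T) : Language.IsRegular (Lset M u) := by
  have h1 := M.finQ
  have h2 := finite_prefixes u
  have hfin : Finite ({l : List T // l <+: u} × M.Q) := inferInstance
  have h := isRegular_of_εNFA hfin (coreNFA M u)
  rwa [coreNFA_accepts hS hE] at h

end Aux

theorem input_Afinite_Bregular_regular {T : Type} (M : GFA T) (hS : M.Simple)
    (hE : M.EpsFree) (A B : Set (List T)) (hA : A.Finite)
    (hB : Language.IsRegular (B : Language T)) :
    Language.IsRegular (leftRightLang M A B : Language T) := by
  have heq : leftRightLang M A B =
      ⋃ u ∈ A, {w : List T | ∃ v, w = u ++ v ∧ v ∈ Lset M u ∩ B} := by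
    ext w
    simp only [leftRightLang, Set.mem_setOf_eq, Set.mem_iUnion, Lset,
      Set.mem_inter_iff, exists_prop]
    constructor
    · rintro ⟨u, v, f, ls, rfl, hu, hv, hf, hc⟩
      exact ⟨u, hu, v, rfl, ⟨ls, f, hf, hc⟩, hv⟩
    · rintro ⟨u, hu, v, rfl, ⟨ls, f, hf, hc⟩, hv⟩
      exact ⟨u, v, f, ls, rfl, hu, hv, hf, hc⟩
  have hreg := isRegular_biUnion hA
    (fun u => {w : List T | ∃ v, w = u ++ v ∧ v ∈ Lset M u ∩ B})
    (fun u _ => isRegular_append u (isRegular_inter (isRegular_Lset hS hE u) hB))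
  rwa [heq]

end IETW
end

section
/- Let M = (Q, Σ, R, s, F) be an ε-free IETWSFA and let A, B, C ⊆ Σ* be regular. Then the language {v | usvw ⇒* f in M, f ∈ F, u ∈ A, v ∈ B, w ∈ C} is regular. -/
namespace IETW

variable {T : Type}

/-- The language `{v | usvw ⇒* f in M, f ∈ F, u ∈ A, v ∈ B, w ∈ C}`. -/
def midLang {T : Type} (M : GFA T) (A B C : Set (List T)) : Set (List T) :=
  {v | v ∈ B ∧ ∃ u w f ls, u ∈ A ∧ w ∈ C ∧ f ∈ M.accept ∧
    M.Chain (u, M.start, v ++ w) ls ([], f, [])}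

/-! ### Auxiliary development -/

/-- Interleaved acceptance: `AccI M q u z` means that from configuration `(u, q, z)`
the machine can erase everything and accept, where (by simplicity and ε-freeness)
every move reads exactly one symbol. -/
inductive AccI (M : GFA T) : M.Q → List T → List T → Prop
  | base {q : M.Q} (h : q ∈ M.accept) : AccI M q [] []
  | left {q p : M.Q} {a : T} {u z : List T} (h : ([a], q, p) ∈ M.ruleL)
      (h' : AccI M p u z) : AccI M q (u ++ [a]) z
  | right {q p : M.Q} {a : T} {u z : List T} (h : (q, [a], p) ∈ M.ruleR)
      (h' : AccI M p u z) : AccI M q u (a :: z)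

lemma chain_accI (M : GFA T) (hS : M.Simple) (hE : M.EpsFree) :
    ∀ {c cf : List T × M.Q × List T} {ls}, M.Chain c ls cf →
      cf.1 = [] → cf.2.2 = [] → cf.2.1 ∈ M.accept → AccI M c.2.1 c.1 c.2.2 := by
  intro c cf ls hc
  induction hc with
  | nil c =>
    intro h1 h2 h3
    obtain ⟨u, q, z⟩ := c
    dsimp at h1 h2 h3 ⊢
    subst h1; subst h2
    exact AccI.base h3
  | cons h _ ih =>
    intro h1 h2 h3
    have ihh := ih h1 h2 h3
    cases h with
    | left hr =>
      obtain ⟨a, rfl⟩ := List.length_eq_one_iff.mp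
        (le_antisymm (hS.1 _ hr) (List.length_pos_iff.mpr (hE.1 _ hr)))
      exact AccI.left hr ihh
    | right hr =>
      obtain ⟨a, rfl⟩ := List.length_eq_one_iff.mp
        (le_antisymm (hS.2 _ hr) (List.length_pos_iff.mpr (hE.2 _ hr)))
      exact AccI.right hr ihh

lemma accI_chain (M : GFA T) : ∀ {q u z}, AccI M q u z →
    ∃ ls f, f ∈ M.accept ∧ M.Chain (u, q, z) ls ([], f, []) := by
  intro q u z h
  induction h with
  | base h => exact ⟨[], _, h, GFA.Chain.nil _⟩
  | left h _ ih =>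
    obtain ⟨ls, f, hf, hc⟩ := ih
    exact ⟨_ :: ls, f, hf, GFA.Chain.cons (GFA.Step.left h) hc⟩
  | right h _ ih =>
    obtain ⟨ls, f, hf, hc⟩ := ih
    exact ⟨_ :: ls, f, hf, GFA.Chain.cons (GFA.Step.right h) hc⟩

/-- `Acc2 M d q t z`: as `AccI`, but the left tape is replaced by a state of a DFA `d`
run backwards over the erased left symbols. -/
inductive Acc2 (M : GFA T) {σ : Type} (d : DFA T σ) : M.Q → σ → List T → Prop
  | base {q : M.Q} (h : q ∈ M.accept) : Acc2 M d q d.start []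
  | left {q p : M.Q} {a : T} {t t' : σ} {z : List T} (h : ([a], q, p) ∈ M.ruleL)
      (ht : d.step t' a = t) (h' : Acc2 M d p t' z) : Acc2 M d q t z
  | right {q p : M.Q} {a : T} {t : σ} {z : List T} (h : (q, [a], p) ∈ M.ruleR)
      (h' : Acc2 M d p t z) : Acc2 M d q t (a :: z)

lemma acc2_iff (M : GFA T) {σ : Type} (d : DFA T σ) {q : M.Q} {t : σ} {z : List T} :
    Acc2 M d q t z ↔ ∃ u, AccI M q u z ∧ d.eval u = t := by
  constructor
  · intro h
    induction h with
    | base h => exact ⟨[], AccI.base h, rfl⟩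
    | @left q p a t t' z h ht _ ih =>
      obtain ⟨u, h1, h2⟩ := ih
      exact ⟨u ++ [a], AccI.left h h1, by rw [DFA.eval_append_singleton, h2, ht]⟩
    | right h _ ih =>
      obtain ⟨u, h1, h2⟩ := ih
      exact ⟨u, AccI.right h h1, h2⟩
  · rintro ⟨u, h1, rfl⟩
    induction h1 with
    | base h => exact Acc2.base h
    | left h _ ih =>
      rw [DFA.eval_append_singleton]
      exact Acc2.left h rfl ih
    | right h _ ih => exact Acc2.right h ih

/-- The "ε-move" relation on pairs (machine state, backward DFA state). -/
def relE (M : GFA T) {σ : Type} (d : DFA T σ) (c c' : M.Q × σ) : Prop :=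
  ∃ a, ([a], c.1, c'.1) ∈ M.ruleL ∧ d.step c'.2 a = c.2

lemma acc2_nil_mp (M : GFA T) {σ : Type} (d : DFA T σ) :
    ∀ {q t z}, Acc2 M d q t z → z = [] →
      ∃ c', Relation.ReflTransGen (relE M d) (q, t) c' ∧ c'.1 ∈ M.accept ∧ c'.2 = d.start := by
  intro q t z h
  induction h with
  | base h => exact fun _ => ⟨_, .refl, h, rfl⟩
  | @left q p a t t' z h ht _ ih =>
    intro hz
    obtain ⟨c', h1, h2⟩ := ih hz
    exact ⟨c', .head ⟨a, h, ht⟩ h1, h2⟩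
  | right h _ _ => intro hz; simp at hz

lemma acc2_nil_mpr (M : GFA T) {σ : Type} (d : DFA T σ) {c c' : M.Q × σ}
    (h : Relation.ReflTransGen (relE M d) c c')
    (h1 : c'.1 ∈ M.accept) (h2 : c'.2 = d.start) : Acc2 M d c.1 c.2 [] := by
  induction h using Relation.ReflTransGen.head_induction_on with
  | refl => rw [h2]; exact Acc2.base h1
  | head hrel _ ih =>
    obtain ⟨a, hl, hd⟩ := hrel
    exact Acc2.left hl hd ih

lemma acc2_cons_mp (M : GFA T) {σ : Type} (d : DFA T σ) :
    ∀ {q t z}, Acc2 M d q t z → ∀ {a z'}, z = a :: z' →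
      ∃ c' p, Relation.ReflTransGen (relE M d) (q, t) c' ∧ (c'.1, [a], p) ∈ M.ruleR ∧
        Acc2 M d p c'.2 z' := by
  intro q t z h
  induction h with
  | base h => intro a z' hz; simp at hz
  | @left q p a t t' z h ht _ ih =>
    intro b z' hz
    obtain ⟨c', p', h1, h2, h3⟩ := ih hz
    exact ⟨c', p', .head ⟨a, h, ht⟩ h1, h2, h3⟩
  | @right q p a t z h h' _ =>
    intro b z' hz
    cases hz
    exact ⟨(q, t), p, .refl, h, h'⟩

lemma acc2_cons_mpr (M : GFA T) {σ : Type} (d : DFA T σ) {c c' : M.Q × σ} {p : M.Q}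
    {a : T} {z : List T} (h : Relation.ReflTransGen (relE M d) c c')
    (h1 : (c'.1, [a], p) ∈ M.ruleR) (h2 : Acc2 M d p c'.2 z) : Acc2 M d c.1 c.2 (a :: z) := by
  induction h using Relation.ReflTransGen.head_induction_on with
  | refl => exact Acc2.right h1 h2
  | head hrel _ ih =>
    obtain ⟨b, hl, hd⟩ := hrel
    exact Acc2.left hl hd ih

/-- Closure of a set of pair-states under ε-moves. -/
def Cl (M : GFA T) {σ : Type} (d : DFA T σ) (S : Set (M.Q × σ)) : Set (M.Q × σ) :=
  {c' | ∃ c ∈ S, Relation.ReflTransGen (relE M d) c c'}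

/-- The subset-construction DFA recognizing `{z | ∃ u ∈ A, usz ⇒* accept}`. -/
def bigDFA (M : GFA T) {σ : Type} (d : DFA T σ) : DFA T (Set (M.Q × σ)) where
  step S a := Cl M d {c | ∃ q, (q, c.2) ∈ S ∧ (q, [a], c.1) ∈ M.ruleR}
  start := Cl M d {c | c.1 = M.start ∧ c.2 ∈ d.accept}
  accept := {S | ∃ c ∈ S, c.1 ∈ M.accept ∧ c.2 = d.start}

lemma bigDFA_evalFrom (M : GFA T) {σ : Type} (d : DFA T σ) :
    ∀ (z : List T) (S : Set (M.Q × σ)),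
      (bigDFA M d).evalFrom (Cl M d S) z ∈ (bigDFA M d).accept ↔
        ∃ c ∈ S, Acc2 M d c.1 c.2 z := by
  intro z
  induction z with
  | nil =>
    intro S
    constructor
    · rintro ⟨c', ⟨c, hc, hrt⟩, hf1, hf2⟩
      exact ⟨c, hc, acc2_nil_mpr M d hrt hf1 hf2⟩
    · rintro ⟨c, hc, h⟩
      obtain ⟨c', h1, h2, h3⟩ := acc2_nil_mp M d h rfl
      exact ⟨c', ⟨c, hc, h1⟩, h2, h3⟩
  | cons a z ih =>
    intro S
    have hstep : (bigDFA M d).evalFrom (Cl M d S) (a :: z)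
        = (bigDFA M d).evalFrom
            (Cl M d {c | ∃ q, (q, c.2) ∈ Cl M d S ∧ (q, [a], c.1) ∈ M.ruleR}) z := rfl
    rw [hstep, ih]
    constructor
    · rintro ⟨c, ⟨q, hq, hr⟩, hacc⟩
      obtain ⟨c0, hc0, hrt⟩ := hq
      exact ⟨c0, hc0, acc2_cons_mpr M d hrt hr hacc⟩
    · rintro ⟨c0, hc0, h⟩
      obtain ⟨c', p, hrt, hr, hacc⟩ := acc2_cons_mp M d h rfl
      exact ⟨(p, c'.2), ⟨c'.1, ⟨c0, hc0, hrt⟩, hr⟩, hacc⟩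

lemma bigDFA_accepts (M : GFA T) {σ : Type} (d : DFA T σ) {z : List T} :
    z ∈ (bigDFA M d).accepts ↔ ∃ t ∈ d.accept, Acc2 M d M.start t z := by
  constructor
  · intro h
    obtain ⟨c, ⟨h1, h2⟩, h3⟩ :=
      (bigDFA_evalFrom M d z {c | c.1 = M.start ∧ c.2 ∈ d.accept}).mp h
    refine ⟨c.2, h2, ?_⟩
    rw [← h1]; exact h3
  · rintro ⟨t, ht, h⟩
    exact (bigDFA_evalFrom M d z {c | c.1 = M.start ∧ c.2 ∈ d.accept}).mpr
      ⟨(M.start, t), ⟨rfl, ht⟩, h⟩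

/-- Right quotient of a DFA's language by an arbitrary language. -/
def quotDFA {σ : Type} (D : DFA T σ) (C : Set (List T)) : DFA T σ where
  step := D.step
  start := D.start
  accept := {s | ∃ w ∈ C, D.evalFrom s w ∈ D.accept}

lemma quotDFA_mem {σ : Type} (D : DFA T σ) (C : Set (List T)) (v : List T) :
    v ∈ (quotDFA D C).accepts ↔ ∃ w ∈ C, v ++ w ∈ D.accepts := by
  constructor
  · rintro ⟨w, hw, h⟩
    refine ⟨w, hw, ?_⟩
    rw [DFA.mem_accepts, DFA.eval, DFA.evalFrom_of_append]
    exact h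
  · rintro ⟨w, hw, h⟩
    rw [DFA.mem_accepts, DFA.eval, DFA.evalFrom_of_append] at h
    exact ⟨w, hw, h⟩

/-- Product DFA for intersection. -/
def interDFA {σ1 σ2 : Type} (d1 : DFA T σ1) (d2 : DFA T σ2) : DFA T (σ1 × σ2) where
  step s a := (d1.step s.1 a, d2.step s.2 a)
  start := (d1.start, d2.start)
  accept := {s | s.1 ∈ d1.accept ∧ s.2 ∈ d2.accept}

lemma interDFA_evalFrom {σ1 σ2 : Type} (d1 : DFA T σ1) (d2 : DFA T σ2) :
    ∀ (x : List T) (s : σ1 × σ2),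
      (interDFA d1 d2).evalFrom s x = (d1.evalFrom s.1 x, d2.evalFrom s.2 x) := by
  intro x
  induction x with
  | nil => intro s; rfl
  | cons a x ih => intro s; exact ih (d1.step s.1 a, d2.step s.2 a)

lemma interDFA_mem {σ1 σ2 : Type} (d1 : DFA T σ1) (d2 : DFA T σ2) (v : List T) :
    v ∈ (interDFA d1 d2).accepts ↔ v ∈ d1.accepts ∧ v ∈ d2.accepts := by
  rw [DFA.mem_accepts, DFA.mem_accepts, DFA.mem_accepts, DFA.eval, DFA.eval, DFA.eval,
    interDFA_evalFrom]
  exact Iff.rfl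

theorem input_ABC_regular_mid_regular {T : Type} (M : GFA T) (hS : M.Simple)
    (hE : M.EpsFree) (A B C : Set (List T)) (hA : Language.IsRegular (A : Language T))
    (hB : Language.IsRegular (B : Language T)) (hC : Language.IsRegular (C : Language T)) :
    Language.IsRegular (midLang M A B C : Language T) := by
  obtain ⟨σA, fA, dA, hdA⟩ := hA
  obtain ⟨σB, fB, dB, hdB⟩ := hB
  haveI := M.finQ
  haveI : Fintype (Set (M.Q × σA)) := Fintype.ofFinite _
  refine ⟨σB × Set (M.Q × σA), inferInstance, interDFA dB (quotDFA (bigDFA M dA) C), ?_⟩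
  ext v
  rw [interDFA_mem, quotDFA_mem, hdB]
  constructor
  · rintro ⟨hvB, w, hw, hvw⟩
    rw [bigDFA_accepts] at hvw
    obtain ⟨t, ht, hacc2⟩ := hvw
    obtain ⟨u, haccI, hu⟩ := (acc2_iff M dA).mp hacc2
    have huA : u ∈ A := by
      have : u ∈ dA.accepts := by rw [DFA.mem_accepts, hu]; exact ht
      rwa [hdA] at this
    obtain ⟨ls, f, hf, hchain⟩ := accI_chain M haccI
    exact ⟨hvB, u, w, f, ls, huA, hw, hf, hchain⟩
  · rintro ⟨hvB, u, w, f, ls, huA, hw, hf, hchain⟩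
    have haccI : AccI M M.start u (v ++ w) := chain_accI M hS hE hchain rfl rfl hf
    have hu : dA.eval u ∈ dA.accept := by
      have : u ∈ dA.accepts := by rw [hdA]; exact huA
      rwa [DFA.mem_accepts] at this
    refine ⟨hvB, w, hw, ?_⟩
    rw [bigDFA_accepts]
    exact ⟨dA.eval u, hu, (acc2_iff M dA).mpr ⟨u, haccI, rfl⟩⟩

end IETW
end

section
/- For every one-way finite automaton M there exists an IETWGFA M' with L(M') = L(M); consequently, the regular languages are strictly contained in the family of languages accepted by IETWGFAs. -/
namespace IETW

variable {T : Type}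

/-- A one-way finite automaton (with ε-moves). -/
structure FA (T : Type) : Type 1 where
  Q : Type
  finQ : Finite Q
  start : Q
  accept : Set Q
  rules : Set (Q × Option T × Q)
  finR : rules.Finite

inductive FA.Step {T : Type} (M : FA T) : M.Q × List T → M.Q × List T → Prop
  | eps {q p : M.Q} {w : List T} (h : (q, none, p) ∈ M.rules) :
      FA.Step M (q, w) (p, w)
  | sym {q p : M.Q} {a : T} {w : List T} (h : (q, some a, p) ∈ M.rules) :
      FA.Step M (q, a :: w) (p, w)

def FA.lang {T : Type} (M : FA T) : Set (List T) :=
  {w | ∃ f, f ∈ M.accept ∧ Relation.ReflTransGen M.Step (M.start, w) (f, [])}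


open Relation List

/-! ### Part 1: FA to GFA -/

/-- The GFA simulating a one-way FA using only right rules. -/
def faToGFA (M : FA T) : GFA T where
  Q := M.Q
  finQ := M.finQ
  start := M.start
  accept := M.accept
  ruleL := ∅
  ruleR := (fun r => (r.1, r.2.1.toList, r.2.2)) '' M.rules
  finL := Set.finite_empty
  finR := M.finR.image _

lemma chain_to_run {M : FA T} : ∀ {c ls c'}, (faToGFA M).Chain c ls c' →
    c.1 = c'.1 ∧ Relation.ReflTransGen M.Step (c.2.1, c.2.2) (c'.2.1, c'.2.2) := by
  intro c ls c' h
  induction h with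
  | nil c => exact ⟨rfl, Relation.ReflTransGen.refl⟩
  | cons h _ ih =>
    cases h with
    | left h => exact absurd h (Set.notMem_empty _)
    | right h =>
      obtain ⟨⟨q₀, o, p₀⟩, hr, he⟩ := h
      injection he with h1 h23
      injection h23 with h2 h3
      refine ⟨ih.1, Relation.ReflTransGen.head ?_ ih.2⟩
      subst h1 h3
      cases o with
      | none =>
        simp only [Option.toList] at h2
        subst h2
        exact FA.Step.eps hr
      | some x =>
        simp only [Option.toList] at h2
        subst h2
        exact FA.Step.sym hr

lemma run_to_chain {M : FA T} : ∀ {c c' : M.Q × List T},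
    Relation.ReflTransGen M.Step c c' → ∀ x : List T,
    ∃ ls, (faToGFA M).Chain (x, c.1, c.2) ls (x, c'.1, c'.2) := by
  intro c c' h
  induction h using Relation.ReflTransGen.head_induction_on with
  | refl => exact fun x => ⟨[], GFA.Chain.nil _⟩
  | head hstep _ ih =>
    intro x
    obtain ⟨ls, hls⟩ := ih x
    cases hstep with
    | @eps q₁ p₁ w₁ h =>
      have hmem : ((q₁ : (faToGFA M).Q), ([] : List T), p₁) ∈ (faToGFA M).ruleR :=
        ⟨(q₁, none, p₁), h, rfl⟩
      have s := GFA.Step.right (M := faToGFA M) (u := x) (v := w₁) hmem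
      simp only [List.nil_append] at s
      exact ⟨_, GFA.Chain.cons s hls⟩
    | @sym q₁ p₁ a₁ w₁ h =>
      have hmem : ((q₁ : (faToGFA M).Q), ([a₁] : List T), p₁) ∈ (faToGFA M).ruleR :=
        ⟨(q₁, some a₁, p₁), h, rfl⟩
      have s := GFA.Step.right (M := faToGFA M) (u := x) (v := w₁) hmem
      simp only [List.singleton_append] at s
      exact ⟨_, GFA.Chain.cons s hls⟩

lemma faToGFA_lang (M : FA T) : (faToGFA M).lang = M.lang := by
  ext w
  constructor
  · rintro ⟨x, y, ls, f, hw, hf, hchain⟩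
    obtain ⟨hx, hrun⟩ := chain_to_run hchain
    simp only at hx
    subst hx
    simp only [List.nil_append] at hw
    subst hw
    exact ⟨f, hf, hrun⟩
  · rintro ⟨f, hf, hrun⟩
    obtain ⟨ls, hls⟩ := run_to_chain hrun []
    exact ⟨[], w, ls, f, rfl, hf, hls⟩

/-! ### Part 2: the GFA for `{aⁿbⁿ}` -/

/-- A GFA accepting `{aⁿbⁿ}`. -/
def abGFA (a b : T) : GFA T where
  Q := Bool
  finQ := inferInstance
  start := true
  accept := {true}
  ruleL := {([a], false, true)}
  ruleR := {(true, [b], false)}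
  finL := Set.finite_singleton _
  finR := Set.finite_singleton _

lemma abChain_inv {a b : T} : ∀ {c c' : List T × (abGFA a b).Q × List T} {ls},
    (abGFA a b).Chain c ls c' → c' = ([], true, []) →
    (c.2.1 = true → ∃ n, c.1 = List.replicate n a ∧ c.2.2 = List.replicate n b) ∧
    (c.2.1 = false → ∃ n, c.1 = List.replicate (n + 1) a ∧ c.2.2 = List.replicate n b) := by
  intro c c' ls h
  induction h with
  | nil c =>
    rintro rfl
    exact ⟨fun _ => ⟨0, rfl, rfl⟩, fun h => by simp at h⟩
  | cons h _ ih' =>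
    intro hc'
    have ih := ih' hc' 
    cases h with
    | @left u v x q p h =>
      have he : (x, q, p) = ([a], false, true) := Set.mem_singleton_iff.mp h
      injection he with hx h23
      injection h23 with hq hp
      subst hx hq hp
      obtain ⟨n, hu, hv⟩ := ih.1 rfl
      refine ⟨fun h => by simp at h, fun _ => ⟨n, ?_, hv⟩⟩
      simp only at hu hv ⊢
      simp only [hu, ← List.replicate_succ' ]
    | @right u v x q p h =>
      have he : (q, x, p) = (true, [b], false) := Set.mem_singleton_iff.mp h
      injection he with hq h23
      injection h23 with hx hp
      subst hx hq hp
      obtain ⟨n, hu, hv⟩ := ih.2 rfl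
      refine ⟨fun _ => ⟨n + 1, hu, ?_⟩, fun h => by simp at h⟩
      simp only at hu hv ⊢
      simp only [hv, List.replicate_succ, List.singleton_append]

lemma abChain_build (a b : T) (n : ℕ) :
    ∃ ls, (abGFA a b).Chain (List.replicate n a, true, List.replicate n b) ls ([], true, []) := by
  induction n with
  | zero => exact ⟨[], GFA.Chain.nil _⟩
  | succ n ih =>
    obtain ⟨ls, hls⟩ := ih
    have hmem1 : ((true : Bool), [b], false) ∈ (abGFA a b).ruleR := rfl
    have s1 := GFA.Step.right (M := abGFA a b) (u := List.replicate (n+1) a)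
      (v := List.replicate n b) hmem1
    rw [show ([b] ++ List.replicate n b : List T) = List.replicate (n+1) b from
      List.replicate_succ.symm] at s1
    have hmem2 : (([a] : List T), false, true) ∈ (abGFA a b).ruleL := rfl
    have s2 := GFA.Step.left (M := abGFA a b) (u := List.replicate n a)
      (v := List.replicate n b) hmem2
    rw [show (List.replicate n a ++ [a] : List T) = List.replicate (n+1) a from
      List.replicate_succ'.symm] at s2
    exact ⟨_, GFA.Chain.cons s1 (GFA.Chain.cons s2 hls)⟩

lemma abGFA_lang (a b : T) :
    (abGFA a b).lang = {w | ∃ n, w = List.replicate n a ++ List.replicate n b} := by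
  ext w
  constructor
  · rintro ⟨x, y, ls, f, hw, hf, hchain⟩
    have hft : f = true := hf
    subst hft
    obtain ⟨n, hx, hy⟩ := (abChain_inv hchain rfl).1 rfl
    simp only at hx hy
    exact ⟨n, by rw [hw, hx, hy]⟩
  · rintro ⟨n, hn⟩
    obtain ⟨ls, hls⟩ := abChain_build a b n
    exact ⟨_, _, ls, true, hn, rfl, hls⟩

/-! ### Part 3: `{aⁿbⁿ}` is not regular -/

lemma run_len_mono {M : FA T} {c c' : M.Q × List T}
    (h : Relation.ReflTransGen M.Step c c') : c'.2.length ≤ c.2.length := by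
  induction h with
  | refl => exact le_rfl
  | tail _ hstep ih =>
    refine le_trans ?_ ih
    cases hstep with
    | eps _ => exact le_rfl
    | sym _ => exact Nat.le_succ _

lemma run_strip {M : FA T} {p : M.Q} {v : List T} :
    ∀ {c : M.Q × List T}, Relation.ReflTransGen M.Step c (p, v) →
    ∀ u q, c = (q, u ++ v) → ∀ z, Relation.ReflTransGen M.Step (q, u ++ z) (p, z) := by
  intro c h
  induction h using Relation.ReflTransGen.head_induction_on with
  | refl =>
    rintro u q hc z
    have : u = [] := by
      have := congrArg (·.2.length) hc
      simpa using this
    subst this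
    injection hc with h1 h2
    subst h1
    exact Relation.ReflTransGen.refl
  | head hstep htail ih =>
    rintro u q hc z
    subst hc
    cases u with
    | nil =>
      simp only [List.nil_append] at hstep ⊢
      cases hstep with
      | @eps _ r _ h =>
        have := ih [] r rfl z
        simp only [List.nil_append] at this
        exact Relation.ReflTransGen.head (FA.Step.eps h) this
      | @sym _ r a' w' h =>
        exfalso
        have hlen := run_len_mono htail
        simp at hlen
    | cons u0 u' =>
      simp only [List.cons_append] at hstep
      cases hstep with
      | @eps _ r _ h =>
        have := ih (u0 :: u') r rfl z
        exact Relation.ReflTransGen.head (FA.Step.eps h) this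
      | @sym _ r a' w' h =>
        exact Relation.ReflTransGen.head (FA.Step.sym h) (ih u' r rfl z)

lemma run_through {M : FA T} {f : M.Q} :
    ∀ {c : M.Q × List T}, Relation.ReflTransGen M.Step c (f, []) →
    ∀ u v q, c = (q, u ++ v) →
    ∃ p, Relation.ReflTransGen M.Step (q, u ++ v) (p, v) ∧
      Relation.ReflTransGen M.Step (p, v) (f, []) := by
  intro c h
  induction h using Relation.ReflTransGen.head_induction_on with
  | refl =>
    rintro u v q hc
    injection hc with h1 h2
    obtain ⟨hu, hv⟩ : u = [] ∧ v = [] := by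
      have := h2.symm
      simpa [List.append_eq_nil_iff] using this
    subst hu hv h1
    exact ⟨f, Relation.ReflTransGen.refl, Relation.ReflTransGen.refl⟩
  | head hstep htail ih =>
    rintro u v q hc
    subst hc
    cases u with
    | nil =>
      refine ⟨q, Relation.ReflTransGen.refl, ?_⟩
      simp only [List.nil_append] at hstep ⊢
      exact Relation.ReflTransGen.head hstep htail
    | cons u0 u' =>
      simp only [List.cons_append] at hstep ⊢
      cases hstep with
      | @eps _ r _ h =>
        obtain ⟨p, h1, h2⟩ := ih (u0 :: u') v r rfl
        simp only [List.cons_append] at h1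
        exact ⟨p, Relation.ReflTransGen.head (FA.Step.eps h) h1, h2⟩
      | @sym _ r a' w' h =>
        obtain ⟨p, hp1, hp2⟩ := ih u' v r rfl
        exact ⟨p, Relation.ReflTransGen.head (FA.Step.sym h) hp1, hp2⟩

lemma ab_not_regular {a b : T} (hab : a ≠ b) (M : FA T)
    (h : M.lang = {w | ∃ n, w = List.replicate n a ++ List.replicate n b}) : False := by
  classical
  have key : ∀ n : ℕ, ∃ p : M.Q,
      Relation.ReflTransGen M.Step (M.start, List.replicate n a ++ List.replicate n b)
        (p, List.replicate n b) ∧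
      ∃ f, f ∈ M.accept ∧ Relation.ReflTransGen M.Step (p, List.replicate n b) (f, []) := by
    intro n
    have hmem : List.replicate n a ++ List.replicate n b ∈ M.lang := by
      rw [h]; exact ⟨n, rfl⟩
    obtain ⟨f, hf, hrun⟩ := hmem
    obtain ⟨p, h1, h2⟩ := run_through hrun (List.replicate n a) (List.replicate n b) _ rfl
    exact ⟨p, h1, f, hf, h2⟩
  haveI := M.finQ
  obtain ⟨m, n, hmn, hpe⟩ :=
    Finite.exists_ne_map_eq_of_infinite (fun n => (key n).choose)
  obtain ⟨hm1, f, hf, hm2⟩ := (key n).choose_spec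
  have hm1' := ((key m).choose_spec).1
  have hstrip := run_strip hm1' (List.replicate m a) M.start rfl (List.replicate n b)
  rw [hpe] at hstrip
  have hmem : List.replicate m a ++ List.replicate n b ∈ M.lang :=
    ⟨f, hf, hstrip.trans hm2⟩
  rw [h] at hmem
  obtain ⟨k, hk⟩ := hmem
  have hma : m = k := by
    have := congrArg (List.count a) hk
    simpa [List.count_append, List.count_replicate, hab, Ne.symm hab] using this
  have hnb : n = k := by
    have := congrArg (List.count b) hk
    simpa [List.count_append, List.count_replicate, hab, Ne.symm hab] using this
  exact hmn (hma.trans hnb.symm)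

theorem fa_to_ietwgfa_and_strict {T : Type} (a b : T) (hab : a ≠ b) :
    (∀ M : FA T, ∃ M' : GFA T, M'.lang = M.lang) ∧
    {L : Set (List T) | ∃ M : FA T, M.lang = L} ⊂
      {L : Set (List T) | ∃ M' : GFA T, M'.lang = L} := by
  have part1 : ∀ M : FA T, ∃ M' : GFA T, M'.lang = M.lang :=
    fun M => ⟨faToGFA M, faToGFA_lang M⟩
  refine ⟨part1, ?_⟩
  have hsub : {L : Set (List T) | ∃ M : FA T, M.lang = L} ⊆
      {L : Set (List T) | ∃ M' : GFA T, M'.lang = L} := by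
    rintro L ⟨M, hM⟩
    obtain ⟨M', hM'⟩ := part1 M
    exact ⟨M', hM'.trans hM⟩
  rw [Set.ssubset_iff_of_subset hsub]
  refine ⟨(abGFA a b).lang, ⟨abGFA a b, rfl⟩, ?_⟩
  rintro ⟨M, hM⟩
  exact ab_not_regular hab M (hM.trans (abGFA_lang a b))


end IETW
end
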